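/- arXiv:1708.02897 — 2 statements merged into one kernel-verified Lean document; each statement's English description precedes it below -/
import Mathlib

section
/- Let X and Y be compact pathwise connected metric spaces, let E be a smooth reflexive Banach space which is 2-iso-reflexive, and let Δ : Lip(X,E) → Lip(Y,E) be a 2-local isometry. Suppose y_1, y_2 ∈ Y and x_1, x_2 ∈ X are such that for each j = 1, 2 there exist norm-one functionals u_j*, v_j* ∈ S_{E*} with v_j*(Δ(f)(y_j)) = u_j*(f(x_j)) for every f ∈ Lip(X,E). Then d(x_1, x_2) ≤ max{1, diam(X)} · d(y_1, y_2). -/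
open Function Metric Set
open scoped NNReal

/-- A function between a metric space and a normed space is bounded and Lipschitz. -/
def IsBddLip {X E : Type*} [MetricSpace X] [NormedAddCommGroup E] (f : X → E) : Prop :=
  (∃ K : ℝ, ∀ x y : X, ‖f x - f y‖ ≤ K * dist x y) ∧ ∃ C : ℝ, ∀ x : X, ‖f x‖ ≤ C

/-- The Lipschitz constant `L(f)` of a function. -/
noncomputable def lipConst {X E : Type*} [MetricSpace X] [NormedAddCommGroup E] (f : X → E) : ℝ :=
  sInf {K : ℝ | 0 ≤ K ∧ ∀ x y : X, ‖f x - f y‖ ≤ K * dist x y}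

/-- The norm `max {L(f), ‖f‖∞}` of the space `Lip(X,E)`. -/
noncomputable def lipNorm {X E : Type*} [MetricSpace X] [NormedAddCommGroup E] (f : X → E) : ℝ :=
  max (lipConst f) (⨆ x : X, ‖f x‖)

/-- `T` is a surjective linear isometry from `Lip(X,E)` onto `Lip(Y,F)` (encoded on plain
functions, with all requirements imposed on bounded Lipschitz functions). -/
structure IsLipIso (𝕜 : Type*) {X Y E F : Type*} [RCLike 𝕜] [MetricSpace X] [MetricSpace Y]
    [NormedAddCommGroup E] [NormedSpace 𝕜 E] [NormedAddCommGroup F] [NormedSpace 𝕜 F]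
    (T : (X → E) → (Y → F)) : Prop where
  mapsLip : ∀ f, IsBddLip f → IsBddLip (T f)
  map_add : ∀ f g, IsBddLip f → IsBddLip g → T (f + g) = T f + T g
  map_smul : ∀ (c : 𝕜) (f), IsBddLip f → T (c • f) = c • T f
  norm_map : ∀ f, IsBddLip f → lipNorm (T f) = lipNorm f
  surjOn : ∀ g, IsBddLip g → ∃ f, IsBddLip f ∧ T f = g

/-- `Δ : Lip(X,E) → Lip(Y,F)` is a `2`-local isometry. -/
def Is2LocalLipIso (𝕜 : Type*) {X Y E F : Type*} [RCLike 𝕜] [MetricSpace X] [MetricSpace Y]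
    [NormedAddCommGroup E] [NormedSpace 𝕜 E] [NormedAddCommGroup F] [NormedSpace 𝕜 F]
    (Δ : (X → E) → (Y → F)) : Prop :=
  ∀ f g : X → E, IsBddLip f → IsBddLip g →
    ∃ T : (X → E) → (Y → F), IsLipIso 𝕜 T ∧ Δ f = T f ∧ Δ g = T g

/-- `φ` preserves distances less than `2`. -/
def PreservesDistLT2 {Y X : Type*} [MetricSpace Y] [MetricSpace X] (φ : Y → X) : Prop :=
  ∀ y y' : Y, dist y y' < 2 → dist (φ y) (φ y') = dist y y'

/-- Two points lie in the same `2`-component: they are joined by a finite chain of points with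
consecutive distances less than `2`. -/
def SameTwoComponent {Y : Type*} [MetricSpace Y] : Y → Y → Prop :=
  Relation.ReflTransGen fun a b => dist a b < 2

/-- `T` is a standard isometry from `Lip(X,E)` to `Lip(Y,F)`: there are `φ ∈ Iso_{<2}(Y,X)` and
`J : Y → Iso(E,F)` constant on `2`-components with `T f y = J y (f (φ y))`. -/
def IsStandardLipIso (𝕜 : Type*) {X Y E F : Type*} [RCLike 𝕜] [MetricSpace X] [MetricSpace Y]
    [NormedAddCommGroup E] [NormedSpace 𝕜 E] [NormedAddCommGroup F] [NormedSpace 𝕜 F]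
    (T : (X → E) → (Y → F)) : Prop :=
  ∃ (φ : Y → X) (ψ : X → Y) (J : Y → E ≃ₗᵢ[𝕜] F),
    Function.LeftInverse ψ φ ∧ Function.RightInverse ψ φ ∧
    PreservesDistLT2 φ ∧ PreservesDistLT2 ψ ∧
    (∀ y y' : Y, SameTwoComponent y y' → J y = J y') ∧
    ∀ f, IsBddLip f → ∀ y : Y, T f y = J y (f (φ y))

/-- `Δ : Lip(X,E) → Lip(Y,F)` is a `2`-local standard isometry. -/
def Is2LocalStdLipIso (𝕜 : Type*) {X Y E F : Type*} [RCLike 𝕜] [MetricSpace X] [MetricSpace Y]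
    [NormedAddCommGroup E] [NormedSpace 𝕜 E] [NormedAddCommGroup F] [NormedSpace 𝕜 F]
    (Δ : (X → E) → (Y → F)) : Prop :=
  ∀ f g : X → E, IsBddLip f → IsBddLip g →
    ∃ T : (X → E) → (Y → F), IsStandardLipIso 𝕜 T ∧ Δ f = T f ∧ Δ g = T g

/-- A normed space is smooth: every norm-one vector has a unique norm-one supporting functional. -/
def IsSmooth (𝕜 : Type*) (E : Type*) [RCLike 𝕜] [NormedAddCommGroup E] [NormedSpace 𝕜 E] :
    Prop :=
  ∀ e : E, ‖e‖ = 1 → ∃! u : StrongDual 𝕜 E, ‖u‖ = 1 ∧ u e = 1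

/-- A normed space is reflexive: the canonical inclusion in the double dual is onto. -/
def IsReflexiveSp (𝕜 : Type*) (E : Type*) [RCLike 𝕜] [NormedAddCommGroup E] [NormedSpace 𝕜 E] :
    Prop :=
  Function.Surjective (NormedSpace.inclusionInDoubleDual 𝕜 E)

/-- `E` is `2`-iso-reflexive: every `2`-local isometry on `E` is linear and surjective. -/
def TwoIsoReflexive (𝕜 : Type*) (E : Type*) [RCLike 𝕜] [NormedAddCommGroup E] [NormedSpace 𝕜 E] :
    Prop :=
  ∀ Δ : E → E, (∀ a b : E, ∃ T : E ≃ₗᵢ[𝕜] E, Δ a = T a ∧ Δ b = T b) →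
    (∀ a b : E, Δ (a + b) = Δ a + Δ b) ∧ (∀ (c : 𝕜) (a : E), Δ (c • a) = c • Δ a) ∧
      Function.Surjective Δ

/-- The set `A_{x,u*,f} = {(y,v*) ∈ Y × B_{F*} : v*(Δ(f)(y)) = u*(f(x))}`. -/
def setA (𝕜 : Type*) {X Y E F : Type*} [RCLike 𝕜] [MetricSpace X] [MetricSpace Y]
    [NormedAddCommGroup E] [NormedSpace 𝕜 E] [NormedAddCommGroup F] [NormedSpace 𝕜 F]
    (Δ : (X → E) → (Y → F)) (x : X) (u : StrongDual 𝕜 E) (f : X → E) :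
    Set (Y × StrongDual 𝕜 F) :=
  {p | ‖p.2‖ ≤ 1 ∧ p.2 (Δ f p.1) = u (f x)}

/-- The set `A_{x,u*} = ⋂_{f ∈ Lip(X,E)} A_{x,u*,f}`. -/
def setAInter (𝕜 : Type*) {X Y E F : Type*} [RCLike 𝕜] [MetricSpace X] [MetricSpace Y]
    [NormedAddCommGroup E] [NormedSpace 𝕜 E] [NormedAddCommGroup F] [NormedSpace 𝕜 F]
    (Δ : (X → E) → (Y → F)) (x : X) (u : StrongDual 𝕜 E) :
    Set (Y × StrongDual 𝕜 F) :=
  ⋂ f ∈ {f : X → E | IsBddLip f}, setA 𝕜 Δ x u f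


namespace SL
open RCLike


variable {X E : Type*} [MetricSpace X] [NormedAddCommGroup E]

theorem lipConst_nonneg (f : X → E) : 0 ≤ lipConst f :=
  Real.sInf_nonneg (fun _ hx => hx.1)

theorem lipConst_le {f : X → E} {K : ℝ} (hK : 0 ≤ K)
    (h : ∀ x y : X, ‖f x - f y‖ ≤ K * dist x y) : lipConst f ≤ K :=
  csInf_le ⟨0, fun _ hx => hx.1⟩ ⟨hK, h⟩

theorem lipSet_nonempty {f : X → E} (hf : IsBddLip f) :
    {K : ℝ | 0 ≤ K ∧ ∀ x y : X, ‖f x - f y‖ ≤ K * dist x y}.Nonempty := by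
  obtain ⟨⟨K, hK⟩, -⟩ := hf
  refine ⟨max K 0, le_max_right _ _, fun x y => (hK x y).trans ?_⟩
  exact mul_le_mul_of_nonneg_right (le_max_left _ _) dist_nonneg

theorem norm_sub_le_lipConst {f : X → E} (hf : IsBddLip f) (a b : X) :
    ‖f a - f b‖ ≤ lipConst f * dist a b := by
  rcases eq_or_lt_of_le (dist_nonneg (x := a) (y := b)) with h0 | h0
  · have hab : a = b := by
      rwa [eq_comm, dist_eq_zero] at h0
    simp [hab]
  · have : ‖f a - f b‖ / dist a b ≤ lipConst f := by
      apply le_csInf (lipSet_nonempty hf)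
      intro K hK
      rw [div_le_iff₀ h0]
      exact hK.2 a b
    calc ‖f a - f b‖ = ‖f a - f b‖ / dist a b * dist a b := by field_simp
      _ ≤ lipConst f * dist a b := mul_le_mul_of_nonneg_right this dist_nonneg

theorem bddAbove_range_norm {f : X → E} (hf : IsBddLip f) :
    BddAbove (Set.range fun x => ‖f x‖) := by
  obtain ⟨-, C, hC⟩ := hf
  exact ⟨C, by rintro - ⟨x, rfl⟩; exact hC x⟩

theorem norm_le_sup {f : X → E} (hf : IsBddLip f) (x : X) :
    ‖f x‖ ≤ ⨆ y : X, ‖f y‖ :=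
  le_ciSup (bddAbove_range_norm hf) x

theorem norm_le_lipNorm {f : X → E} (hf : IsBddLip f) (x : X) :
    ‖f x‖ ≤ lipNorm f :=
  (norm_le_sup hf x).trans (le_max_right _ _)

theorem lipConst_le_lipNorm (f : X → E) : lipConst f ≤ lipNorm f := le_max_left _ _

theorem lipNorm_le [Nonempty X] {f : X → E} {A : ℝ}
    (h1 : lipConst f ≤ A) (h2 : ∀ x, ‖f x‖ ≤ A) : lipNorm f ≤ A :=
  max_le h1 (ciSup_le h2)

theorem lipNorm_nonneg [Nonempty X] (f : X → E) : 0 ≤ lipNorm f :=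
  (lipConst_nonneg f).trans (lipConst_le_lipNorm f)

theorem bddLip_add {f g : X → E} (hf : IsBddLip f) (hg : IsBddLip g) :
    IsBddLip (f + g) := by
  obtain ⟨⟨K1, hK1⟩, C1, hC1⟩ := hf
  obtain ⟨⟨K2, hK2⟩, C2, hC2⟩ := hg
  constructor
  · refine ⟨K1 + K2, fun x y => ?_⟩
    have : f x + g x - (f y + g y) = (f x - f y) + (g x - g y) := by abel
    calc ‖(f + g) x - (f + g) y‖ = ‖(f x - f y) + (g x - g y)‖ := by
          simp only [Pi.add_apply]; rw [this]
      _ ≤ ‖f x - f y‖ + ‖g x - g y‖ := norm_add_le _ _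
      _ ≤ K1 * dist x y + K2 * dist x y := add_le_add (hK1 x y) (hK2 x y)
      _ = (K1 + K2) * dist x y := by ring
  · exact ⟨C1 + C2, fun x => (norm_add_le _ _).trans (add_le_add (hC1 x) (hC2 x))⟩

theorem bddLip_zero : IsBddLip (0 : X → E) :=
  ⟨⟨0, fun x y => by simp⟩, 0, fun x => by simp⟩

theorem bddLip_const (z : E) : IsBddLip (fun _ : X => z) :=
  ⟨⟨0, fun x y => by simp⟩, ‖z‖, fun x => le_rfl⟩

theorem lipConst_const (z : E) : lipConst (fun _ : X => z) = 0 :=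
  le_antisymm (lipConst_le le_rfl (fun x y => by simp)) (lipConst_nonneg _)

variable {𝕜 : Type*} [RCLike 𝕜] [NormedSpace 𝕜 E]

theorem bddLip_smul (c : 𝕜) {f : X → E} (hf : IsBddLip f) : IsBddLip (c • f) := by
  obtain ⟨⟨K, hK⟩, C, hC⟩ := hf
  constructor
  · refine ⟨‖c‖ * K, fun x y => ?_⟩
    have : (c • f) x - (c • f) y = c • (f x - f y) := by
      simp [smul_sub]
    rw [this, norm_smul, mul_assoc]
    exact mul_le_mul_of_nonneg_left (hK x y) (norm_nonneg c)
  · refine ⟨‖c‖ * C, fun x => ?_⟩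
    have : (c • f) x = c • f x := rfl
    rw [this, norm_smul]
    exact mul_le_mul_of_nonneg_left (hC x) (norm_nonneg c)

/-- scalar-shaped vector valued functions -/
theorem bddLip_shape (σ : X → ℝ) {K C : ℝ}
    (hK : ∀ x y, |σ x - σ y| ≤ K * dist x y) (hC : ∀ x, |σ x| ≤ C) (z : E) :
    IsBddLip (fun x => ((σ x : ℝ) : 𝕜) • z) := by
  constructor
  · refine ⟨K * ‖z‖, fun x y => ?_⟩
    have : ((σ x : ℝ) : 𝕜) • z - ((σ y : ℝ) : 𝕜) • z = ((σ x - σ y : ℝ) : 𝕜) • z := by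
      push_cast
      rw [sub_smul]
    rw [this, norm_smul, RCLike.norm_ofReal]
    calc |σ x - σ y| * ‖z‖ ≤ K * dist x y * ‖z‖ :=
          mul_le_mul_of_nonneg_right (hK x y) (norm_nonneg z)
      _ = K * ‖z‖ * dist x y := by ring
  · refine ⟨C * ‖z‖, fun x => ?_⟩
    rw [norm_smul, RCLike.norm_ofReal]
    exact mul_le_mul_of_nonneg_right (hC x) (norm_nonneg z)

theorem shape_lipConst_le (σ : X → ℝ) {K : ℝ} (hK0 : 0 ≤ K)
    (hK : ∀ x y, |σ x - σ y| ≤ K * dist x y) (z : E) (hz : ‖z‖ ≤ 1) :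
    lipConst (fun x => ((σ x : ℝ) : 𝕜) • z) ≤ K := by
  apply lipConst_le hK0
  intro x y
  have : ((σ x : ℝ) : 𝕜) • z - ((σ y : ℝ) : 𝕜) • z = ((σ x - σ y : ℝ) : 𝕜) • z := by
    push_cast; rw [sub_smul]
  rw [this, norm_smul, RCLike.norm_ofReal]
  calc |σ x - σ y| * ‖z‖ ≤ |σ x - σ y| * 1 :=
        mul_le_mul_of_nonneg_left hz (abs_nonneg _)
    _ = |σ x - σ y| := mul_one _
    _ ≤ K * dist x y := hK x y



theorem phase_exists {𝕜 : Type*} [RCLike 𝕜] (c : 𝕜) :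
    ∃ l : 𝕜, ‖l‖ = 1 ∧ l * c = (‖c‖ : 𝕜) := by
  rcases eq_or_ne c 0 with rfl | hc
  · exact ⟨1, by simp, by simp⟩
  · refine ⟨(starRingEnd 𝕜) c / (‖c‖ : 𝕜), ?_, ?_⟩
    · rw [norm_div, RCLike.norm_conj, RCLike.norm_ofReal, abs_of_nonneg (norm_nonneg c)]
      exact div_self (norm_ne_zero_iff.mpr hc)
    · rw [div_mul_eq_mul_div, RCLike.conj_mul]
      rw [show ((‖c‖ : ℝ) : 𝕜) ^ 2 = (‖c‖ : 𝕜) * (‖c‖ : 𝕜) by ring]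
      rw [mul_div_assoc, div_self (by simpa using hc), mul_one]

variable {𝕜 E : Type*} [RCLike 𝕜] [NormedAddCommGroup E] [NormedSpace 𝕜 E]

theorem eq_one_of_re_eq_one {w : 𝕜} (h1 : re w = 1) (h2 : ‖w‖ ≤ 1) : w = 1 := by
  have hsq : ‖w‖ ^ 2 = re w * re w + im w * im w := RCLike.norm_sq_eq_def
  have him : im w * im w ≤ 0 := by
    have : ‖w‖ ^ 2 ≤ 1 := by
      calc ‖w‖ ^ 2 ≤ 1 ^ 2 := by
            apply pow_le_pow_left₀ (norm_nonneg w) h2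
      _ = 1 := one_pow 2
    rw [hsq, h1] at this
    linarith
  have him0 : im w = 0 := by nlinarith [mul_self_nonneg (im w)]
  apply RCLike.ext <;> simp [h1, him0]

/-- The one-sided-derivative support lemma: if `1 + t*c ≤ ‖e + t z‖` for small positive `t`,
then `c ≤ re (u₀ z)` for the (unique) support functional `u₀` of the unit vector `e`. -/
theorem supp_bound (hsm : IsSmooth 𝕜 E) {e : E} (he : ‖e‖ = 1)
    {u₀ : StrongDual 𝕜 E} (hu₀ : ‖u₀‖ = 1) (hu₀e : u₀ e = 1)
    (z : E) {c t₀ : ℝ} (ht₀ : 0 < t₀)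
    (hc : ∀ t : ℝ, 0 < t → t ≤ t₀ → 1 + t * c ≤ ‖e + (t : 𝕜) • z‖) :
    c ≤ re (u₀ z) := by
  letI : Module ℝ E := Module.compHom E (algebraMap ℝ 𝕜)
  haveI hst : IsScalarTower ℝ 𝕜 E := ⟨fun r k x => by
    show (r • k) • x = algebraMap ℝ 𝕜 r • (k • x)
    rw [Algebra.smul_def, mul_smul]⟩
  letI : NormedSpace ℝ E := ⟨fun r x => by
    show ‖algebraMap ℝ 𝕜 r • x‖ ≤ ‖r‖ * ‖x‖
    rw [norm_smul, RCLike.algebraMap_eq_ofReal]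
    simp [RCLike.norm_ofReal]⟩
  have hsmul : ∀ (t : ℝ) (v : E), t • v = (t : 𝕜) • v := fun t v => by
    show algebraMap ℝ 𝕜 t • v = (t : 𝕜) • v
    rw [RCLike.algebraMap_eq_ofReal]
  -- the quotient function and its inf
  set q : E → ℝ → ℝ := fun v t => (‖e + (t : 𝕜) • v‖ - 1) / t with hq
  set Q : E → Set ℝ := fun v => {r : ℝ | ∃ t : ℝ, 0 < t ∧ r = q v t} with hQ
  have hQne : ∀ v, (Q v).Nonempty := fun v => ⟨q v 1, 1, one_pos, rfl⟩
  have hqlb : ∀ v, ∀ t : ℝ, 0 < t → -‖v‖ ≤ q v t := by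
    intro v t ht
    simp only [hq]
    rw [le_div_iff₀ ht]
    have h1 : ‖e‖ ≤ ‖e + (t : 𝕜) • v‖ + ‖(t : 𝕜) • v‖ := by
      calc ‖e‖ = ‖(e + (t : 𝕜) • v) - (t : 𝕜) • v‖ := by rw [add_sub_cancel_right]
        _ ≤ _ := norm_sub_le _ _
    rw [he] at h1
    have h2 : ‖(t : 𝕜) • v‖ = t * ‖v‖ := by
      rw [norm_smul, RCLike.norm_ofReal, abs_of_pos ht]
    nlinarith
  have hQbdd : ∀ v, BddBelow (Q v) := by
    intro v
    refine ⟨-‖v‖, ?_⟩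
    rintro r ⟨t, ht, rfl⟩
    exact hqlb v t ht
  set D : E → ℝ := fun v => sInf (Q v) with hD
  have hDlb : ∀ v, -‖v‖ ≤ D v := fun v => le_csInf (hQne v) (by rintro r ⟨t, ht, rfl⟩; exact hqlb v t ht)
  have hDle : ∀ v, ∀ t : ℝ, 0 < t → D v ≤ q v t := fun v t ht =>
    csInf_le (hQbdd v) ⟨t, ht, rfl⟩
  -- monotonicity of q in t
  have hmono : ∀ v, ∀ s t : ℝ, 0 < s → s ≤ t → q v s ≤ q v t := by
    intro v s t hs hst
    have ht : 0 < t := lt_of_lt_of_le hs hst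
    have key : ‖e + (s : 𝕜) • v‖ ≤ (1 - s / t) + (s / t) * ‖e + (t : 𝕜) • v‖ := by
      have hrep : e + (s : 𝕜) • v =
          ((1 - s / t : ℝ) : 𝕜) • e + ((s / t : ℝ) : 𝕜) • (e + (t : 𝕜) • v) := by
        have htne : (t : 𝕜) ≠ 0 := by
          simpa using ne_of_gt ht
        push_cast
        match_scalars
        · ring
        · field_simp
      rw [hrep]
      calc ‖((1 - s / t : ℝ) : 𝕜) • e + ((s / t : ℝ) : 𝕜) • (e + (t : 𝕜) • v)‖
          ≤ ‖((1 - s / t : ℝ) : 𝕜) • e‖ + ‖((s / t : ℝ) : 𝕜) • (e + (t : 𝕜) • v)‖ :=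
            norm_add_le _ _
        _ ≤ (1 - s / t) + (s / t) * ‖e + (t : 𝕜) • v‖ := by
            rw [norm_smul, norm_smul, RCLike.norm_ofReal, RCLike.norm_ofReal, he, mul_one]
            have h1 : |1 - s / t| = 1 - s / t := by
              rw [abs_of_nonneg]
              have : s / t ≤ 1 := by
                rw [div_le_one ht]; exact hst
              linarith
            have h2 : |s / t| = s / t := abs_of_pos (div_pos hs ht)
            rw [h1, h2]
    have key2 : ‖e + (s : 𝕜) • v‖ - 1 ≤ (s / t) * (‖e + (t : 𝕜) • v‖ - 1) := by
      nlinarith [key]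
    simp only [hq]
    rw [div_le_div_iff₀ hs ht]
    calc (‖e + (s : 𝕜) • v‖ - 1) * t ≤ ((s / t) * (‖e + (t : 𝕜) • v‖ - 1)) * t :=
          mul_le_mul_of_nonneg_right key2 ht.le
      _ = (‖e + (t : 𝕜) • v‖ - 1) * s := by field_simp
  -- c is a lower bound for Q z
  have hcD : c ≤ D z := by
    apply le_csInf (hQne z)
    rintro r ⟨t, ht, rfl⟩
    have haux : ∀ s : ℝ, 0 < s → s ≤ t₀ → c ≤ q z s := by
      intro s hs hs0
      simp only [hq]; rw [ le_div_iff₀ hs]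
      have := hc s hs hs0
      linarith
    rcases le_or_gt t t₀ with h | h
    · exact haux t ht h
    · exact (haux t₀ ht₀ le_rfl).trans (hmono z t₀ t ht₀ h.le)
  -- subadditivity of D
  have hsub : ∀ v w : E, D (v + w) ≤ D v + D w := by
    intro v w
    apply le_of_forall_pos_le_add
    intro ε hε
    obtain ⟨r1, ⟨t1, ht1, rfl⟩, hr1⟩ := exists_lt_of_csInf_lt (hQne v)
      (show D v < D v + ε / 2 by linarith)
    obtain ⟨r2, ⟨t2, ht2, rfl⟩, hr2⟩ := exists_lt_of_csInf_lt (hQne w)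
      (show D w < D w + ε / 2 by linarith)
    set t := min t1 t2 with htdef
    have ht : 0 < t := lt_min ht1 ht2
    have key : q (v + w) (t / 2) ≤ q v t + q w t := by
      have hrep : e + ((t / 2 : ℝ) : 𝕜) • (v + w) =
          ((1 / 2 : ℝ) : 𝕜) • (e + (t : 𝕜) • v) + ((1 / 2 : ℝ) : 𝕜) • (e + (t : 𝕜) • w) := by
        push_cast
        match_scalars <;> ring
      have hn : ‖e + ((t / 2 : ℝ) : 𝕜) • (v + w)‖ ≤
          (‖e + (t : 𝕜) • v‖ + ‖e + (t : 𝕜) • w‖) / 2 := by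
        rw [hrep]
        calc _ ≤ ‖((1 / 2 : ℝ) : 𝕜) • (e + (t : 𝕜) • v)‖ +
              ‖((1 / 2 : ℝ) : 𝕜) • (e + (t : 𝕜) • w)‖ := norm_add_le _ _
          _ = _ := by
            rw [norm_smul, norm_smul, RCLike.norm_ofReal]
            rw [show |(1 : ℝ) / 2| = 1 / 2 by norm_num]
            ring
      simp only [hq]
      rw [div_le_iff₀ (by linarith : (0:ℝ) < t / 2)]
      have e1 : q v t = (‖e + (t : 𝕜) • v‖ - 1) / t := rfl
      have e2 : q w t = (‖e + (t : 𝕜) • w‖ - 1) / t := rfl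
      have e1' : q v t * t = ‖e + (t : 𝕜) • v‖ - 1 := by
        rw [e1]; field_simp
      have e2' : q w t * t = ‖e + (t : 𝕜) • w‖ - 1 := by
        rw [e2]; field_simp
      nlinarith [hn]
    calc D (v + w) ≤ q (v + w) (t / 2) := hDle _ _ (by linarith)
      _ ≤ q v t + q w t := key
      _ ≤ q v t1 + q w t2 :=
          add_le_add (hmono v t t1 ht (min_le_left _ _)) (hmono w t t2 ht (min_le_right _ _))
      _ ≤ D v + ε / 2 + (D w + ε / 2) := add_le_add hr1.le hr2.le
      _ = D v + D w + ε := by ring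
  -- positive homogeneity
  have hhom : ∀ (a : ℝ), 0 < a → ∀ v : E, D ((a : 𝕜) • v) = a * D v := by
    intro a ha v
    have hqeq : ∀ t : ℝ, 0 < t → q ((a : 𝕜) • v) t = a * q v (t * a) := by
      intro t ht
      have hsm2 : (t : 𝕜) • (a : 𝕜) • v = ((t * a : ℝ) : 𝕜) • v := by
        rw [smul_smul]; norm_cast
      simp only [hq]
      rw [hsm2]
      have h1 : t ≠ 0 := ht.ne'
      have h2 : a ≠ 0 := ha.ne'
      field_simp
    apply le_antisymm
    · -- D (a v) ≤ a * D v
      have h1 : ∀ t : ℝ, 0 < t → D ((a : 𝕜) • v) ≤ a * q v t := by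
        intro t ht
        have := hDle ((a : 𝕜) • v) (t / a) (div_pos ht ha)
        rw [hqeq (t / a) (div_pos ht ha)] at this
        rw [div_mul_cancel₀ _ (ne_of_gt ha)] at this
        exact this
      have h2 : D ((a : 𝕜) • v) / a ≤ D v := by
        apply le_csInf (hQne v)
        rintro r ⟨t, ht, rfl⟩
        rw [div_le_iff₀ ha]
        have := h1 t ht
        linarith [h1 t ht]
      calc D ((a : 𝕜) • v) = D ((a : 𝕜) • v) / a * a := by field_simp
        _ ≤ D v * a := mul_le_mul_of_nonneg_right h2 ha.le
        _ = a * D v := mul_comm _ _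
    · -- a * D v ≤ D (a v)
      apply le_csInf (hQne _)
      rintro r ⟨t, ht, rfl⟩
      rw [hqeq t ht]
      have := hDle v (t * a) (mul_pos ht ha)
      nlinarith
  have hDzero : D 0 = 0 := by
    have : ∀ t : ℝ, 0 < t → q 0 t = 0 := by
      intro t ht
      simp only [hq]
      simp [he]
    apply le_antisymm
    · simpa [this 1 one_pos] using hDle 0 1 one_pos
    · apply le_csInf (hQne 0)
      rintro r ⟨t, ht, rfl⟩
      rw [this t ht]
  have hDnormle : ∀ v : E, D v ≤ ‖v‖ := by
    intro v
    have h1 : q v 1 ≤ ‖v‖ := by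
      simp only [hq]
      simp only [div_one, RCLike.ofReal_one, one_smul]
      have := norm_add_le e v
      rw [he] at this
      linarith
    exact (hDle v 1 one_pos).trans h1
  have hDe : D e = 1 := by
    have hqe : ∀ t : ℝ, 0 < t → q e t = 1 := by
      intro t ht
      simp only [hq]
      have : e + (t : 𝕜) • e = ((1 + t : ℝ) : 𝕜) • e := by
        push_cast; match_scalars; ring
      rw [this, norm_smul, RCLike.norm_ofReal, he, mul_one, abs_of_pos (by linarith)]
      field_simp
      ring
    apply le_antisymm
    · have := hDle e 1 one_pos
      rwa [hqe 1 one_pos] at this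
    · apply le_csInf (hQne e)
      rintro r ⟨t, ht, rfl⟩
      rw [hqe t ht]
  have hDnege : D (-e) = -1 := by
    have hqne : ∀ t : ℝ, 0 < t → q (-e) t = (|1 - t| - 1) / t := by
      intro t ht
      simp only [hq]
      have : e + (t : 𝕜) • (-e) = ((1 - t : ℝ) : 𝕜) • e := by
        push_cast; match_scalars; ring
      rw [this, norm_smul, RCLike.norm_ofReal, he, mul_one]
    apply le_antisymm
    · have h1 := hDle (-e) 1 one_pos
      rw [hqne 1 one_pos] at h1
      simpa using h1
    · apply le_csInf (hQne _)
      rintro r ⟨t, ht, rfl⟩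
      rw [hqne t ht]
      rw [le_div_iff₀ ht]
      have : 1 - t ≤ |1 - t| := le_abs_self _
      linarith
  -- trivial case z = 0
  rcases eq_or_ne z 0 with rfl | hz
  · have h := hc t₀ ht₀ le_rfl
    simp only [smul_zero, add_zero, he] at h
    have hc0 : c ≤ 0 := by nlinarith
    calc c ≤ 0 := hc0
      _ = re (u₀ 0) := by simp
  -- Hahn–Banach extension dominated by D
  have hdomle : ∀ t : ℝ, t * D z ≤ D (t • z) := by
    intro t
    rcases lt_trichotomy t 0 with hlt | rfl | hgt
    · have hsplit : (t : ℝ) • z = (-t : ℝ) • (-z) := by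
        rw [smul_neg, neg_smul, neg_neg]
      have h0 : 0 ≤ D z + D (-z) := by
        have := hsub z (-z)
        rw [add_neg_cancel, hDzero] at this
        linarith
      rw [hsplit, hsmul, hhom (-t) (by linarith) (-z)]
      nlinarith
    · rw [zero_smul, zero_mul, hDzero]
    · rw [hsmul, hhom t hgt z, mul_comm]
  set f : E →ₗ.[ℝ] ℝ := LinearPMap.mkSpanSingleton z (D z) hz with hfdef
  have hdom : ∀ x : f.domain, f x ≤ D (x : E) := by
    intro x
    have hxv' : (x : E) ∈ (Submodule.span ℝ {z} : Submodule ℝ E) := x.2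
    obtain ⟨t, hxt⟩ := Submodule.mem_span_singleton.1 hxv'
    have hmem2 : t • z ∈ f.domain := by rw [hxt]; exact x.2
    have hx2 : x = ⟨t • z, hmem2⟩ := Subtype.ext hxt.symm
    rw [hx2]
    have happ : f ⟨t • z, hmem2⟩ = t • (D z) :=
      LinearPMap.mkSpanSingleton'_apply z (D z) _ t _
    rw [happ, smul_eq_mul]
    exact hdomle t
  obtain ⟨g, hgf, hgD⟩ := exists_extension_of_le_sublinear f D
    (fun a ha x => by rw [hsmul]; exact hhom a ha x) hsub hdom
  have hgz : g z = D z := by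
    have hmem : z ∈ f.domain := Submodule.mem_span_singleton_self z
    have h1 := hgf ⟨z, hmem⟩
    rw [h1]
    exact LinearPMap.mkSpanSingleton_apply ℝ ℝ hz (D z)
  have hgbound : ∀ x : E, |g x| ≤ ‖x‖ := by
    intro x
    have h1 : g x ≤ ‖x‖ := (hgD x).trans (hDnormle x)
    have h2 : g (-x) ≤ ‖x‖ := by
      have := (hgD (-x)).trans (hDnormle (-x))
      rwa [norm_neg] at this
    rw [map_neg] at h2
    rw [abs_le]
    constructor <;> linarith
  have hge : g e = 1 := by
    have h1 : g e ≤ 1 := by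
      have := (hgD e)
      rwa [hDe] at this
    have h2 : g (-e) ≤ -1 := by
      have := hgD (-e)
      rwa [hDnege] at this
    rw [map_neg] at h2
    linarith
  set gc : E →L[ℝ] ℝ := LinearMap.mkContinuous g 1
    (fun x => by rw [Real.norm_eq_abs, one_mul]; exact hgbound x) with hgc
  set u' : E →L[𝕜] 𝕜 := gc.extendTo𝕜' with hu'
  have hre : ∀ x : E, re (u' x) = g x := by
    intro x
    erw [hu', StrongDual.extendRCLike_apply]
    simp [hgc]
  have hbnd : ∀ x : E, ‖u' x‖ ≤ ‖x‖ := by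
    intro x
    obtain ⟨l, hl1, hl2⟩ := phase_exists (u' x)
    have h1 : ‖u' x‖ = re ((‖u' x‖ : 𝕜)) := by simp
    rw [h1, ← hl2]
    have h2 : l * u' x = u' (l • x) := by
      rw [map_smul, smul_eq_mul]
    rw [h2, hre]
    calc g (l • x) ≤ |g (l • x)| := le_abs_self _
      _ ≤ ‖l • x‖ := hgbound _
      _ = ‖x‖ := by rw [norm_smul, hl1, one_mul]
  have hue : u' e = 1 := by
    apply eq_one_of_re_eq_one
    · rw [hre e, hge]
    · calc ‖u' e‖ ≤ ‖e‖ := hbnd e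
        _ = 1 := he
  have hunorm : ‖u'‖ = 1 := by
    apply le_antisymm
    · exact ContinuousLinearMap.opNorm_le_bound _ zero_le_one
        (fun x => by rw [one_mul]; exact hbnd x)
    · calc (1 : ℝ) = ‖u' e‖ := by rw [hue]; simp
        _ ≤ ‖u'‖ * ‖e‖ := u'.le_opNorm e
        _ = ‖u'‖ := by rw [he, mul_one]
  obtain ⟨uu, -, huniq⟩ := hsm e he
  have h1 : u' = uu := huniq u' ⟨hunorm, hue⟩
  have h2 : u₀ = uu := huniq u₀ ⟨hu₀, hu₀e⟩
  have hu0u' : u₀ = u' := h2.trans h1.symm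
  calc c ≤ D z := hcD
    _ = g z := hgz.symm
    _ = re (u' z) := (hre z).symm
    _ = re (u₀ z) := by rw [hu0u']


end SL

noncomputable def SLpeak (𝕜 : Type*) [RCLike 𝕜] {Z E : Type*} [MetricSpace Z]
    [NormedAddCommGroup E] [NormedSpace 𝕜 E] (x₀ : Z) (e : E) : Z → E :=
  fun x => ((1 - min (dist x x₀) 2 / 2 : ℝ) : 𝕜) • e

namespace SL
open RCLike

theorem abs_min_sub_min (a b c : ℝ) : |min a c - min b c| ≤ |a - b| := by
  rcases le_total a c with h1 | h1 <;> rcases le_total b c with h2 | h2 <;>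
    simp only [min_eq_left, min_eq_right, h1, h2] <;> rw [abs_le] <;>
    constructor <;> rw [abs_sub_comm] at * <;>
    first
      | linarith [le_abs_self (a - b), le_abs_self (b - a), neg_abs_le (a - b), neg_abs_le (b - a)]
      | linarith [le_abs_self (b - a), neg_abs_le (b - a)]

variable {𝕜 Z E : Type*} [RCLike 𝕜] [MetricSpace Z] [NormedAddCommGroup E] [NormedSpace 𝕜 E]

theorem peak_lip (x₀ : Z) {e : E} (he : ‖e‖ = 1) (x y : Z) :
    ‖SLpeak 𝕜 x₀ e x - SLpeak 𝕜 x₀ e y‖ ≤ (1 / 2) * dist x y := by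
  have hrep : SLpeak 𝕜 x₀ e x - SLpeak 𝕜 x₀ e y =
      ((min (dist y x₀) 2 / 2 - min (dist x x₀) 2 / 2 : ℝ) : 𝕜) • e := by
    unfold SLpeak
    push_cast
    match_scalars
    ring
  rw [hrep, norm_smul, RCLike.norm_ofReal, he, mul_one]
  have h1 : |min (dist y x₀) 2 / 2 - min (dist x x₀) 2 / 2| =
      |min (dist y x₀) 2 - min (dist x x₀) 2| / 2 := by
    rw [show min (dist y x₀) 2 / 2 - min (dist x x₀) 2 / 2 =
      (min (dist y x₀) 2 - min (dist x x₀) 2) / 2 by ring]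
    rw [abs_div, show |(2:ℝ)| = 2 by norm_num]
  rw [h1]
  have h2 := abs_min_sub_min (dist y x₀) (dist x x₀) 2
  have h3 := abs_dist_sub_le y x x₀
  rw [dist_comm y x] at h3
  linarith

theorem peak_bddLip (x₀ : Z) (e : E) : IsBddLip (SLpeak 𝕜 x₀ e) := by
  unfold SLpeak
  apply bddLip_shape (K := 1 / 2) (C := 1)
  · intro x y
    have h1 := abs_min_sub_min (dist x x₀) (dist y x₀) 2
    have h2 := abs_dist_sub_le x y x₀
    have h3 : |(1 - min (dist x x₀) 2 / 2) - (1 - min (dist y x₀) 2 / 2)| =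
        |min (dist x x₀) 2 - min (dist y x₀) 2| / 2 := by
      rw [show (1 - min (dist x x₀) 2 / 2) - (1 - min (dist y x₀) 2 / 2) =
        -((min (dist x x₀) 2 - min (dist y x₀) 2) / 2) by ring]
      rw [abs_neg, abs_div, show |(2:ℝ)| = 2 by norm_num]
    rw [h3]
    linarith
  · intro x
    have h1 : (0:ℝ) ≤ min (dist x x₀) 2 := le_min dist_nonneg (by norm_num)
    have h2 : min (dist x x₀) 2 ≤ 2 := min_le_right _ _
    rw [abs_le]
    constructor <;> [linarith; linarith]

theorem peak_apply_self (x₀ : Z) (e : E) : SLpeak 𝕜 x₀ e x₀ = e := by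
  unfold SLpeak
  rw [dist_self]
  rw [min_eq_left (by norm_num : (0:ℝ) ≤ 2)]
  norm_num

/-- The smooth point lemma: a norm-one "linear" functional on `Lip(Z,E)` attaining the value `1`
at the peak function `SLpeak x₀ e` must be `u₀ ∘ δ_{x₀}` where `u₀` is the support
functional of `e`. -/
theorem spl (hsm : IsSmooth 𝕜 E) {e : E} (he : ‖e‖ = 1) {u₀ : StrongDual 𝕜 E}
    (hu₀ : ‖u₀‖ = 1) (hu₀e : u₀ e = 1) (x₀ : Z)
    (W : (Z → E) → 𝕜)
    (Wadd : ∀ f g : Z → E, IsBddLip f → IsBddLip g → W (f + g) = W f + W g)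
    (Wsmul : ∀ (c : 𝕜) (f : Z → E), IsBddLip f → W (c • f) = c * W f)
    (Wbdd : ∀ f : Z → E, IsBddLip f → ‖W f‖ ≤ lipNorm f)
    (WQ : W (SLpeak 𝕜 x₀ e) = 1) :
    ∀ h : Z → E, IsBddLip h → W h = u₀ (h x₀) := by
  haveI : Nonempty Z := ⟨x₀⟩
  have main : ∀ h : Z → E, IsBddLip h → RCLike.re (W h) ≤ RCLike.re (u₀ (h x₀)) := by
    intro h hh
    obtain ⟨⟨K0, hK0⟩, C0, hC0⟩ := hh
    have hh' : IsBddLip h := ⟨⟨K0, hK0⟩, C0, hC0⟩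
    set K := max K0 0 with hKdef
    set C := max C0 1 with hCdef
    have hK : ∀ x y, ‖h x - h y‖ ≤ K * dist x y := fun x y =>
      (hK0 x y).trans (mul_le_mul_of_nonneg_right (le_max_left _ _) dist_nonneg)
    have hC : ∀ x, ‖h x‖ ≤ C := fun x => (hC0 x).trans (le_max_left _ _)
    have hK0' : (0:ℝ) ≤ K := le_max_right _ _
    have hC0' : (1:ℝ) ≤ C := le_max_right _ _
    set t₀ : ℝ := 1 / (2 * (K + C + 1)) with ht₀def
    have hden : (0:ℝ) < 2 * (K + C + 1) := by positivity
    have ht₀ : 0 < t₀ := by positivity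
    apply supp_bound hsm he hu₀ hu₀e (h x₀) ht₀
    intro t ht htt₀
    have hts : 2 * t * (K + C + 1) ≤ 1 := by
      rw [ht₀def] at htt₀
      rw [le_div_iff₀ hden] at htt₀
      linarith
    set A := ‖e + (t : 𝕜) • h x₀‖ with hAdef
    have hA1 : 1 - t * C ≤ A := by
      have h1 : ‖e‖ ≤ ‖e + (t : 𝕜) • h x₀‖ + ‖(t : 𝕜) • h x₀‖ := by
        calc ‖e‖ = ‖(e + (t : 𝕜) • h x₀) - (t : 𝕜) • h x₀‖ := by rw [add_sub_cancel_right]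
          _ ≤ _ := norm_sub_le _ _
      have h2 : ‖(t : 𝕜) • h x₀‖ ≤ t * C := by
        rw [norm_smul, RCLike.norm_ofReal, abs_of_pos ht]
        exact mul_le_mul_of_nonneg_left (hC x₀) ht.le
      rw [he] at h1
      rw [hAdef]
      linarith
    have hsumbdd : IsBddLip (SLpeak 𝕜 x₀ e + (t : 𝕜) • h) :=
      bddLip_add (peak_bddLip x₀ e) (bddLip_smul _ hh')
    have hWsum : W (SLpeak 𝕜 x₀ e + (t : 𝕜) • h) = 1 + (t : 𝕜) * W h := by
      rw [Wadd _ _ (peak_bddLip x₀ e) (bddLip_smul _ hh'), Wsmul _ _ hh', WQ]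
    have h1 : 1 + t * RCLike.re (W h) ≤ ‖W (SLpeak 𝕜 x₀ e + (t : 𝕜) • h)‖ := by
      have := RCLike.re_le_norm (W (SLpeak 𝕜 x₀ e + (t : 𝕜) • h))
      rw [hWsum] at this ⊢
      rw [map_add] at this
      rw [RCLike.re_ofReal_mul] at this
      simpa using this
    have h2 : ‖W (SLpeak 𝕜 x₀ e + (t : 𝕜) • h)‖ ≤ lipNorm (SLpeak 𝕜 x₀ e + (t : 𝕜) • h) :=
      Wbdd _ hsumbdd
    have h3 : lipNorm (SLpeak 𝕜 x₀ e + (t : 𝕜) • h) ≤ A := by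
      apply lipNorm_le
      · -- Lipschitz part
        have hlc : lipConst (SLpeak 𝕜 x₀ e + (t : 𝕜) • h) ≤ 1 / 2 + t * K := by
          apply lipConst_le (by positivity)
          intro x y
          have e1 : (SLpeak 𝕜 x₀ e + (t : 𝕜) • h) x - (SLpeak 𝕜 x₀ e + (t : 𝕜) • h) y =
              (SLpeak 𝕜 x₀ e x - SLpeak 𝕜 x₀ e y) + (t : 𝕜) • (h x - h y) := by
            simp only [Pi.add_apply, Pi.smul_apply, smul_sub]
            abel
          rw [e1]
          have e2 : ‖(t : 𝕜) • (h x - h y)‖ ≤ t * (K * dist x y) := by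
            rw [norm_smul, RCLike.norm_ofReal, abs_of_pos ht]
            exact mul_le_mul_of_nonneg_left (hK x y) ht.le
          calc ‖_ + _‖ ≤ ‖SLpeak 𝕜 x₀ e x - SLpeak 𝕜 x₀ e y‖ + ‖(t : 𝕜) • (h x - h y)‖ :=
                norm_add_le _ _
            _ ≤ (1 / 2) * dist x y + t * (K * dist x y) :=
                add_le_add (peak_lip x₀ he x y) e2
            _ = (1 / 2 + t * K) * dist x y := by ring
        have : 1 / 2 + t * K ≤ A := by nlinarith
        linarith
      · -- sup part
        intro x
        have hxval : (SLpeak 𝕜 x₀ e + (t : 𝕜) • h) x =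
            ((1 - min (dist x x₀) 2 / 2 : ℝ) : 𝕜) • e + (t : 𝕜) • h x := rfl
        rcases le_or_gt (dist x x₀) 2 with hnear | hfar
        · set m : ℝ := dist x x₀ / 2 with hmdef
          have hm0 : 0 ≤ m := by positivity
          have hm1 : m ≤ 1 := by rw [hmdef]; linarith
          have hmin : min (dist x x₀) 2 = dist x x₀ := min_eq_left hnear
          have hrep : (SLpeak 𝕜 x₀ e + (t : 𝕜) • h) x =
              ((1 - m : ℝ) : 𝕜) • (e + (t : 𝕜) • h x₀) + (t : 𝕜) • (h x - h x₀) +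
                ((t * m : ℝ) : 𝕜) • h x₀ := by
            rw [hxval, hmin]
            rw [hmdef]
            push_cast
            match_scalars <;> ring
          rw [hrep]
          have n1 : ‖((1 - m : ℝ) : 𝕜) • (e + (t : 𝕜) • h x₀)‖ = (1 - m) * A := by
            rw [norm_smul, RCLike.norm_ofReal, abs_of_nonneg (by linarith : (0:ℝ) ≤ 1 - m)]
          have n2 : ‖(t : 𝕜) • (h x - h x₀)‖ ≤ t * (K * (2 * m)) := by
            rw [norm_smul, RCLike.norm_ofReal, abs_of_pos ht]
            have : ‖h x - h x₀‖ ≤ K * dist x x₀ := hK x x₀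
            have hd : dist x x₀ = 2 * m := by rw [hmdef]; ring
            rw [hd] at this
            exact mul_le_mul_of_nonneg_left this ht.le
          have n3 : ‖((t * m : ℝ) : 𝕜) • h x₀‖ ≤ t * m * C := by
            rw [norm_smul, RCLike.norm_ofReal, abs_of_nonneg (by positivity : (0:ℝ) ≤ t * m)]
            exact mul_le_mul_of_nonneg_left (hC x₀) (by positivity)
          calc ‖_ + _ + _‖ ≤ ‖_ + _‖ + ‖((t * m : ℝ) : 𝕜) • h x₀‖ := norm_add_le _ _
            _ ≤ ‖((1 - m : ℝ) : 𝕜) • (e + (t : 𝕜) • h x₀)‖ + ‖(t : 𝕜) • (h x - h x₀)‖ +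
                ‖((t * m : ℝ) : 𝕜) • h x₀‖ := by
                  have := norm_add_le (((1 - m : ℝ) : 𝕜) • (e + (t : 𝕜) • h x₀))
                    ((t : 𝕜) • (h x - h x₀))
                  linarith
            _ ≤ (1 - m) * A + t * (K * (2 * m)) + t * m * C := by
                rw [n1]; exact add_le_add (add_le_add le_rfl n2) n3
            _ ≤ A := by nlinarith
        · have hmin : min (dist x x₀) 2 = 2 := min_eq_right hfar.le
          rw [hxval, hmin]
          norm_num
          have : ‖(t : 𝕜) • h x‖ ≤ t * C := by
            rw [norm_smul, RCLike.norm_ofReal, abs_of_pos ht]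
            exact mul_le_mul_of_nonneg_left (hC x) ht.le
          have hA2 : t * C ≤ A := by nlinarith
          exact this.trans hA2
    linarith [h1, h2.trans h3]
  -- phases
  intro h hh
  have hph : ∀ l : 𝕜, ‖l‖ = 1 → RCLike.re (l * (W h - u₀ (h x₀))) ≤ 0 := by
    intro l hl
    have h1 := main (l • h) (bddLip_smul l hh)
    rw [Wsmul l h hh] at h1
    have h2 : u₀ ((l • h) x₀) = l * u₀ (h x₀) := by
      have : (l • h) x₀ = l • h x₀ := rfl
      rw [this, map_smul, smul_eq_mul]
    rw [h2] at h1
    have h3 : l * (W h - u₀ (h x₀)) = l * W h - l * u₀ (h x₀) := by ring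
    rw [h3, map_sub]
    linarith
  obtain ⟨l, hl1, hl2⟩ := phase_exists (W h - u₀ (h x₀))
  have h4 := hph l hl1
  rw [hl2] at h4
  rw [RCLike.ofReal_re] at h4
  have h5 : W h - u₀ (h x₀) = 0 := by
    rwa [← norm_le_zero_iff]
  have := sub_eq_zero.mp h5
  exact this

end SL


namespace SL
open RCLike

variable {𝕜 E : Type*} [RCLike 𝕜] [NormedAddCommGroup E] [NormedSpace 𝕜 E]

theorem attain (hrefl : Function.Surjective (NormedSpace.inclusionInDoubleDual 𝕜 E))
    {u : StrongDual 𝕜 E} (hu : ‖u‖ = 1) : ∃ e : E, ‖e‖ = 1 ∧ u e = 1 := by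
  have hu0 : u ≠ 0 := by
    intro h
    rw [h] at hu
    simp at hu
  obtain ⟨G, hG1, hG2⟩ := exists_dual_vector 𝕜 u (norm_ne_zero_iff.mpr hu0)
  obtain ⟨e, he⟩ := hrefl G
  have hnorm : ‖e‖ = 1 := by
    have h1 : ‖(NormedSpace.inclusionInDoubleDualLi 𝕜 (E := E)) e‖ = ‖e‖ :=
      (NormedSpace.inclusionInDoubleDualLi 𝕜 (E := E)).norm_map e
    have h2 : (NormedSpace.inclusionInDoubleDualLi 𝕜 (E := E)) e =
        NormedSpace.inclusionInDoubleDual 𝕜 E e := rfl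
    rw [h2, he] at h1
    rw [← h1, hG1]
  refine ⟨e, hnorm, ?_⟩
  have h3 : (NormedSpace.inclusionInDoubleDual 𝕜 E e) u = u e := NormedSpace.dual_def 𝕜 E e u
  rw [he, hG2, hu] at h3
  rw [← h3]
  norm_num

theorem lipConst_add_const {X : Type*} [MetricSpace X] (f : X → E) (z : E) :
    lipConst (fun x => f x + z) = lipConst f := by
  unfold lipConst
  congr 1
  ext K
  simp only [Set.mem_setOf_eq, add_sub_add_right_eq_sub]

theorem lipNorm_zero {X : Type*} [MetricSpace X] [Nonempty X] :
    lipNorm (fun _ : X => (0 : E)) = 0 := by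
  unfold lipNorm
  rw [lipConst_const]
  have : (⨆ _ : X, ‖(0 : E)‖) = 0 := by
    simp only [norm_zero]
    exact ciSup_const
  rw [this, max_self]

theorem peak_norm_le {Z : Type*} [MetricSpace Z] (x₀ : Z) {e : E} (he : ‖e‖ = 1) (x : Z) :
    ‖SLpeak 𝕜 x₀ e x‖ ≤ 1 := by
  unfold SLpeak
  rw [norm_smul, RCLike.norm_ofReal, he, mul_one]
  have h1 : (0:ℝ) ≤ min (dist x x₀) 2 := le_min dist_nonneg (by norm_num)
  have h2 : min (dist x x₀) 2 ≤ 2 := min_le_right _ _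
  rw [abs_le]
  constructor <;> [linarith; linarith]

theorem peak_lipNorm {Z : Type*} [MetricSpace Z] (x₀ : Z) {e : E} (he : ‖e‖ = 1) :
    lipNorm (SLpeak 𝕜 x₀ e) = 1 := by
  haveI : Nonempty Z := ⟨x₀⟩
  apply le_antisymm
  · apply lipNorm_le
    · exact le_trans (lipConst_le (by norm_num : (0:ℝ) ≤ 1/2)
        (fun x y => peak_lip x₀ he x y)) (by norm_num)
    · exact peak_norm_le x₀ he
  · have h1 : ‖SLpeak 𝕜 x₀ e x₀‖ ≤ lipNorm (SLpeak 𝕜 x₀ e) :=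
      norm_le_lipNorm (peak_bddLip x₀ e) x₀
    rwa [peak_apply_self, he] at h1

/-- The localization lemma: a coordinate functional of `T` that does not annihilate the
constants is a point evaluation. -/
theorem loc {X Y : Type*} [MetricSpace X] [CompactSpace X] [Nonempty X] [MetricSpace Y]
    (hsm : IsSmooth 𝕜 E)
    (hrefl : Function.Surjective (NormedSpace.inclusionInDoubleDual 𝕜 E))
    {T : (X → E) → (Y → E)} (hT : IsLipIso 𝕜 T)
    {w : StrongDual 𝕜 E} (hw : ‖w‖ = 1) (y₀ : Y)
    (hnz : ∃ z : E, w (T (fun _ => z) y₀) ≠ 0) :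
    ∃ (x' : X) (a : StrongDual 𝕜 E) (zb : E), ‖zb‖ = 1 ∧ a zb = 1 ∧ ‖a‖ ≤ 1 ∧
      ∀ h : X → E, IsBddLip h → w (T h y₀) = a (h x') := by
  classical
  haveI : Nonempty Y := ⟨y₀⟩
  -- injectivity of T on bounded Lipschitz functions
  have hTzero : T (fun _ => (0 : E)) = fun _ => (0 : E) := by
    have h0 : ((0 : 𝕜) • (fun _ : X => (0 : E))) = (fun _ : X => (0 : E)) := by
      funext x; simp
    have := hT.map_smul 0 (fun _ => (0 : E)) (bddLip_const 0)
    rw [h0] at this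
    rw [this]
    funext y
    simp
  have Tinj : ∀ f g : X → E, IsBddLip f → IsBddLip g → T f = T g → f = g := by
    intro f g hf hg hfg
    have hdiff : IsBddLip (f + (-1 : 𝕜) • g) := bddLip_add hf (bddLip_smul _ hg)
    have h1 : T (f + (-1 : 𝕜) • g) = T f + (-1 : 𝕜) • T g := by
      rw [hT.map_add f ((-1 : 𝕜) • g) hf (bddLip_smul _ hg), hT.map_smul (-1 : 𝕜) g hg]
    have h2 : T f + (-1 : 𝕜) • T g = fun _ => (0 : E) := by
      funext y
      simp only [Pi.add_apply, Pi.smul_apply, hfg]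
      simp
    have h3 : lipNorm (f + (-1 : 𝕜) • g) = 0 := by
      rw [← hT.norm_map _ hdiff, h1, h2, lipNorm_zero]
    funext x
    have h4 : ‖(f + (-1 : 𝕜) • g) x‖ ≤ lipNorm (f + (-1 : 𝕜) • g) :=
      norm_le_lipNorm hdiff x
    rw [h3] at h4
    have h5 : (f + (-1 : 𝕜) • g) x = f x - g x := by
      simp only [Pi.add_apply, Pi.smul_apply]
      rw [neg_one_smul]
      abel
    rw [h5] at h4
    have := norm_le_zero_iff.mp (h4.trans le_rfl)
    exact sub_eq_zero.mp this
  -- a choice of inverse of T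
  set Tinv : (Y → E) → (X → E) := fun g =>
    if hg : IsBddLip g then Classical.choose (hT.surjOn g hg) else fun _ => 0 with hTinvdef
  have hTinveq : ∀ g : Y → E, (hg : IsBddLip g) →
      Tinv g = Classical.choose (hT.surjOn g hg) := by
    intro g hg
    show (if hg' : IsBddLip g then Classical.choose (hT.surjOn g hg') else fun _ => 0) = _
    rw [dif_pos hg]
  have hTinv1 : ∀ g : Y → E, IsBddLip g → IsBddLip (Tinv g) := by
    intro g hg
    rw [hTinveq g hg]
    exact (Classical.choose_spec (hT.surjOn g hg)).1
  have hTinv2 : ∀ g : Y → E, IsBddLip g → T (Tinv g) = g := by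
    intro g hg
    rw [hTinveq g hg]
    exact (Classical.choose_spec (hT.surjOn g hg)).2
  have hTinvnorm : ∀ g : Y → E, IsBddLip g → lipNorm (Tinv g) = lipNorm g := by
    intro g hg
    have := hT.norm_map (Tinv g) (hTinv1 g hg)
    rw [hTinv2 g hg] at this
    exact this.symm
  -- attainer of w and the peak on the Y side
  obtain ⟨eh, heh, hweh⟩ := attain hrefl hw
  set k : Y → E := SLpeak 𝕜 y₀ eh with hkdef
  have hk : IsBddLip k := peak_bddLip y₀ eh
  set p : X → E := Tinv k with hpdef
  have hp : IsBddLip p := hTinv1 k hk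
  have hTp : T p = k := hTinv2 k hk
  have hNp : lipNorm p = 1 := by
    rw [hpdef, hTinvnorm k hk, hkdef, peak_lipNorm y₀ heh]
  -- the coordinate functional
  set Φ : (X → E) → 𝕜 := fun h => w (T h y₀) with hΦdef
  have hΦbdd : ∀ h : X → E, IsBddLip h → ‖Φ h‖ ≤ lipNorm h := by
    intro h hh
    rw [hΦdef]
    calc ‖w (T h y₀)‖ ≤ ‖w‖ * ‖T h y₀‖ := w.le_opNorm _
      _ = ‖T h y₀‖ := by rw [hw, one_mul]
      _ ≤ lipNorm (T h) := norm_le_lipNorm (hT.mapsLip h hh) y₀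
      _ = lipNorm h := hT.norm_map h hh
  have hΦp : Φ p = 1 := by
    rw [hΦdef]
    show w (T p y₀) = 1
    rw [hTp, hkdef, peak_apply_self, hweh]
  -- the sup of p equals 1
  have hSple : ∀ x, ‖p x‖ ≤ 1 := by
    intro x
    have := norm_le_lipNorm hp x
    rwa [hNp] at this
  have hconstval : ∀ z : E, Φ (fun _ => z) = w (T (fun _ => z) y₀) := fun z => rfl
  have hSp : (⨆ x : X, ‖p x‖) = 1 := by
    apply le_antisymm
    · exact ciSup_le hSple
    · by_contra hcon
      push_neg at hcon
      set S := ⨆ x : X, ‖p x‖ with hSdef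
      have hS1 : S < 1 := hcon
      obtain ⟨z, hz⟩ := hnz
      have hz0 : z ≠ 0 := by
        intro hz0
        rw [hz0] at hz
        rw [hTzero] at hz
        simp at hz
      set c : 𝕜 := Φ (fun _ => z) with hcdef
      have hc : c ≠ 0 := hz
      obtain ⟨l, hl1, hl2⟩ := phase_exists c
      set t : ℝ := (1 - S) / (‖z‖ + 1) with htdef
      have hzpos : (0:ℝ) < ‖z‖ + 1 := by positivity
      have ht : 0 < t := by
        rw [htdef]
        apply div_pos (by linarith) hzpos
      have htz : t * ‖z‖ ≤ 1 - S := by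
        rw [htdef]
        rw [div_mul_eq_mul_div, div_le_iff₀ hzpos]
        nlinarith [norm_nonneg z]
      set p' : X → E := p + ((t : 𝕜) * l) • (fun _ => z) with hp'def
      have hp' : IsBddLip p' := bddLip_add hp (bddLip_smul _ (bddLip_const z))
      have hval : Φ p' = 1 + (t : 𝕜) * (‖c‖ : 𝕜) := by
        rw [hp'def, hΦdef]
        show w (T (p + ((t : 𝕜) * l) • (fun _ => z)) y₀) = _
        rw [hT.map_add p _ hp (bddLip_smul _ (bddLip_const z)),
          hT.map_smul _ _ (bddLip_const z)]
        simp only [Pi.add_apply, Pi.smul_apply]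
        rw [map_add, map_smul]
        have e1 : w (T p y₀) = 1 := hΦp
        have e2 : w (T (fun _ => z) y₀) = c := rfl
        rw [e1, e2, smul_eq_mul]
        rw [mul_assoc, hl2]
      have hub : ‖Φ p'‖ ≤ 1 := by
        have h1 := hΦbdd p' hp'
        have h2 : lipNorm p' ≤ 1 := by
          apply lipNorm_le
          · have e3 : p' = fun x => p x + ((t : 𝕜) * l) • z := by
              funext x
              simp [hp'def]
            rw [e3, lipConst_add_const]
            exact (lipConst_le_lipNorm p).trans_eq hNp
          · intro x
            have e4 : p' x = p x + ((t : 𝕜) * l) • z := rfl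
            rw [e4]
            calc ‖p x + ((t : 𝕜) * l) • z‖ ≤ ‖p x‖ + ‖((t : 𝕜) * l) • z‖ := norm_add_le _ _
              _ ≤ S + t * ‖z‖ := by
                  apply add_le_add
                  · exact le_ciSup (bddAbove_range_norm hp) x
                  · rw [norm_smul, norm_mul, hl1, RCLike.norm_ofReal, abs_of_pos ht]
                    simp
              _ ≤ 1 := by linarith
        exact h1.trans h2
      have hlb : (1 : ℝ) + t * ‖c‖ ≤ ‖Φ p'‖ := by
        rw [hval]
        have : re ((1 : 𝕜) + (t : 𝕜) * (‖c‖ : 𝕜)) = 1 + t * ‖c‖ := by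
          rw [map_add, RCLike.re_ofReal_mul]
          simp
        calc (1:ℝ) + t * ‖c‖ = re ((1 : 𝕜) + (t : 𝕜) * (‖c‖ : 𝕜)) := this.symm
          _ ≤ ‖(1 : 𝕜) + (t : 𝕜) * (‖c‖ : 𝕜)‖ := RCLike.re_le_norm _
      have hcpos : 0 < ‖c‖ := norm_pos_iff.mpr hc
      nlinarith
  -- attain the sup on the compact space X
  have hcont : Continuous p := by
    obtain ⟨⟨K, hK⟩, -⟩ := hp
    have hK0 : ∀ x y, dist (p x) (p y) ≤ (max K 0) * dist x y := by
      intro x y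
      rw [dist_eq_norm]
      exact (hK x y).trans (mul_le_mul_of_nonneg_right (le_max_left _ _) dist_nonneg)
    exact (LipschitzWith.of_dist_le_mul (K := Real.toNNReal (max K 0)) (by
      intro x y
      rw [Real.coe_toNNReal _ (le_max_right _ _)]
      exact hK0 x y)).continuous
  obtain ⟨xs, -, hxs⟩ := isCompact_univ.exists_isMaxOn (Set.univ_nonempty)
    ((continuous_norm.comp hcont).continuousOn : ContinuousOn (fun x => ‖p x‖) Set.univ)
  have hxsmax : ∀ x : X, ‖p x‖ ≤ ‖p xs‖ := fun x => hxs (Set.mem_univ x)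
  have hpxs : ‖p xs‖ = 1 := by
    apply le_antisymm (hSple xs)
    calc (1:ℝ) = ⨆ x : X, ‖p x‖ := hSp.symm
      _ ≤ ‖p xs‖ := ciSup_le hxsmax
  -- the support functional of p xs
  obtain ⟨a, ⟨ha1, ha2⟩, -⟩ := hsm (p xs) hpxs
  refine ⟨xs, a, p xs, hpxs, ha2, le_of_eq ha1, ?_⟩
  -- the competing functional
  set Ψ : (Y → E) → 𝕜 := fun g => a (Tinv g xs) with hΨdef
  have hTinvadd : ∀ g g' : Y → E, IsBddLip g → IsBddLip g' →
      Tinv (g + g') = Tinv g + Tinv g' := by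
    intro g g' hg hg'
    apply Tinj _ _ (hTinv1 _ (bddLip_add hg hg')) (bddLip_add (hTinv1 _ hg) (hTinv1 _ hg'))
    rw [hTinv2 _ (bddLip_add hg hg'), hT.map_add _ _ (hTinv1 _ hg) (hTinv1 _ hg'),
      hTinv2 _ hg, hTinv2 _ hg']
  have hTinvsmul : ∀ (cc : 𝕜) (g : Y → E), IsBddLip g → Tinv (cc • g) = cc • Tinv g := by
    intro cc g hg
    apply Tinj _ _ (hTinv1 _ (bddLip_smul _ hg)) (bddLip_smul _ (hTinv1 _ hg))
    rw [hTinv2 _ (bddLip_smul _ hg), hT.map_smul _ _ (hTinv1 _ hg), hTinv2 _ hg]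
  have hΨres := spl hsm heh hw hweh y₀ Ψ
    (fun g g' hg hg' => by rw [hΨdef]; simp only; rw [hTinvadd g g' hg hg']; simp)
    (fun cc g hg => by
      rw [hΨdef]; simp only
      rw [hTinvsmul cc g hg]
      simp only [Pi.smul_apply, map_smul, smul_eq_mul])
    (fun g hg => by
      rw [hΨdef]; simp only
      calc ‖a (Tinv g xs)‖ ≤ ‖a‖ * ‖Tinv g xs‖ := a.le_opNorm _
        _ = ‖Tinv g xs‖ := by rw [ha1, one_mul]
        _ ≤ lipNorm (Tinv g) := norm_le_lipNorm (hTinv1 g hg) xs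
        _ = lipNorm g := hTinvnorm g hg)
    (by
      rw [hΨdef]; simp only
      show a (Tinv (SLpeak 𝕜 y₀ eh) xs) = 1
      rw [← hkdef, ← hpdef, ha2])
  intro h hh
  have h1 := hΨres (T h) (hT.mapsLip h hh)
  have h2 : Tinv (T h) = h := by
    apply Tinj _ _ (hTinv1 _ (hT.mapsLip h hh)) hh
    rw [hTinv2 _ (hT.mapsLip h hh)]
  rw [hΨdef] at h1
  simp only at h1
  rw [h2] at h1
  exact h1.symm

end SL


noncomputable def SLbump (𝕜 : Type*) [RCLike 𝕜] {Z E : Type*} [MetricSpace Z]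
    [NormedAddCommGroup E] [NormedSpace 𝕜 E] (x₀ : Z) (ρ : ℝ) (z : E) : Z → E :=
  fun x => ((ρ - min (dist x x₀) ρ : ℝ) : 𝕜) • z

namespace SL
open RCLike

variable {𝕜 Z E : Type*} [RCLike 𝕜] [MetricSpace Z] [NormedAddCommGroup E] [NormedSpace 𝕜 E]

theorem bump_shape_lip (x₀ : Z) (ρ : ℝ) (x y : Z) :
    |(ρ - min (dist x x₀) ρ) - (ρ - min (dist y x₀) ρ)| ≤ 1 * dist x y := by
  have h1 := abs_min_sub_min (dist x x₀) (dist y x₀) ρ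
  have h2 := abs_dist_sub_le x y x₀
  have h3 : (ρ - min (dist x x₀) ρ) - (ρ - min (dist y x₀) ρ) =
      -(min (dist x x₀) ρ - min (dist y x₀) ρ) := by ring
  rw [h3, abs_neg, one_mul]
  linarith

theorem bump_bddLip (x₀ : Z) {ρ : ℝ} (hρ : 0 ≤ ρ) (z : E) :
    IsBddLip (SLbump 𝕜 x₀ ρ z) := by
  unfold SLbump
  apply bddLip_shape (K := 1) (C := ρ)
  · exact bump_shape_lip x₀ ρ
  · intro x
    have h1 : (0:ℝ) ≤ min (dist x x₀) ρ := le_min dist_nonneg hρ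
    have h2 : min (dist x x₀) ρ ≤ ρ := min_le_right _ _
    rw [abs_le]
    constructor <;> [linarith; linarith]

theorem bump_apply_self (x₀ : Z) {ρ : ℝ} (hρ : 0 ≤ ρ) (z : E) :
    SLbump 𝕜 x₀ ρ z x₀ = ((ρ : ℝ) : 𝕜) • z := by
  unfold SLbump
  rw [dist_self, min_eq_left hρ, sub_zero]

theorem bump_apply_far (x₀ : Z) {ρ : ℝ} (z : E) {x : Z} (hfar : ρ ≤ dist x x₀) :
    SLbump 𝕜 x₀ ρ z x = 0 := by
  unfold SLbump
  rw [min_eq_right hfar, sub_self]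
  norm_num

theorem bump_lipNorm_le (x₀ : Z) {ρ : ℝ} (hρ0 : 0 ≤ ρ) (hρ1 : ρ ≤ 1) {z : E}
    (hz : ‖z‖ = 1) : lipNorm (SLbump 𝕜 x₀ ρ z) ≤ 1 := by
  haveI : Nonempty Z := ⟨x₀⟩
  apply lipNorm_le
  · unfold SLbump
    apply shape_lipConst_le _ (by norm_num : (0:ℝ) ≤ 1) _ z hz.le
    intro x y
    exact bump_shape_lip x₀ ρ x y
  · intro x
    unfold SLbump
    rw [norm_smul, RCLike.norm_ofReal, hz, mul_one]
    have h1 : (0:ℝ) ≤ min (dist x x₀) ρ := le_min dist_nonneg hρ0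
    have h2 : min (dist x x₀) ρ ≤ ρ := min_le_right _ _
    rw [abs_le]
    constructor <;> [linarith; linarith]

theorem lipNorm_const {X : Type*} [MetricSpace X] [Nonempty X] (z : E) :
    lipNorm (fun _ : X => z) = ‖z‖ := by
  unfold lipNorm
  rw [lipConst_const]
  have h1 : (⨆ _ : X, ‖z‖) = ‖z‖ := ciSup_const
  rw [h1]
  exact max_eq_right (norm_nonneg z)

end SL

/-- The map `ψ` is Lipschitz: `d(x₁,x₂) ≤ max{1, diam X}·d(y₁,y₂)` for supported pairs. -/
theorem stmt18 {𝕜 X Y E : Type*} [RCLike 𝕜]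
    [MetricSpace X] [CompactSpace X] [PathConnectedSpace X]
    [MetricSpace Y] [CompactSpace Y] [PathConnectedSpace Y]
    [NormedAddCommGroup E] [NormedSpace 𝕜 E] [CompleteSpace E]
    (hsm : IsSmooth 𝕜 E) (hrefl : IsReflexiveSp 𝕜 E) (h2ir : TwoIsoReflexive 𝕜 E)
    (Δ : (X → E) → (Y → E)) (hΔ : Is2LocalLipIso 𝕜 Δ)
    (y₁ y₂ : Y) (x₁ x₂ : X)
    (u₁ u₂ v₁ v₂ : StrongDual 𝕜 E)
    (hu₁ : ‖u₁‖ = 1) (hu₂ : ‖u₂‖ = 1) (hv₁ : ‖v₁‖ = 1) (hv₂ : ‖v₂‖ = 1)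
    (h₁ : ∀ f : X → E, IsBddLip f → v₁ (Δ f y₁) = u₁ (f x₁))
    (h₂ : ∀ f : X → E, IsBddLip f → v₂ (Δ f y₂) = u₂ (f x₂)) :
    dist x₁ x₂ ≤ max 1 (Metric.diam (Set.univ : Set X)) * dist y₁ y₂ := by
  classical
  haveI hXne : Nonempty X := PathConnectedSpace.nonempty
  set d : ℝ := dist y₁ y₂ with hddef
  set M : ℝ := max 1 (Metric.diam (Set.univ : Set X)) with hMdef
  have hM1 : (1:ℝ) ≤ M := le_max_left _ _
  have hd0 : (0:ℝ) ≤ d := dist_nonneg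
  rcases le_or_gt 1 d with hd1 | hd1
  · -- trivial case : d ≥ 1
    have h1 : dist x₁ x₂ ≤ Metric.diam (Set.univ : Set X) :=
      Metric.dist_le_diam_of_mem isCompact_univ.isBounded (Set.mem_univ x₁) (Set.mem_univ x₂)
    have h2 : Metric.diam (Set.univ : Set X) ≤ M := le_max_right _ _
    calc dist x₁ x₂ ≤ M := h1.trans h2
      _ = M * 1 := (mul_one M).symm
      _ ≤ M * d := by nlinarith
  · -- main case : d < 1
    obtain ⟨e₁, he₁, hu₁e₁⟩ := SL.attain hrefl hu₁
    obtain ⟨e₂, he₂, hu₂e₂⟩ := SL.attain hrefl hu₂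
    obtain ⟨T, hT, hTf, hTg⟩ := hΔ (SLpeak 𝕜 x₁ e₁) (SLpeak 𝕜 x₂ e₂)
      (SL.peak_bddLip x₁ e₁) (SL.peak_bddLip x₂ e₂)
    -- basic functional properties of h ↦ v (T h y)
    have Wadd : ∀ (v : StrongDual 𝕜 E) (y : Y) (f g : X → E),
        IsBddLip f → IsBddLip g → v (T (f + g) y) = v (T f y) + v (T g y) := by
      intro v y f g hf hg
      rw [hT.map_add f g hf hg]
      simp [Pi.add_apply, map_add]
    have Wsmul : ∀ (v : StrongDual 𝕜 E) (y : Y) (c : 𝕜) (f : X → E),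
        IsBddLip f → v (T (c • f) y) = c * v (T f y) := by
      intro v y c f hf
      rw [hT.map_smul c f hf]
      simp [Pi.smul_apply, map_smul, smul_eq_mul]
    have Wbdd : ∀ (v : StrongDual 𝕜 E), ‖v‖ = 1 → ∀ (y : Y) (f : X → E),
        IsBddLip f → ‖v (T f y)‖ ≤ lipNorm f := by
      intro v hv y f hf
      calc ‖v (T f y)‖ ≤ ‖v‖ * ‖T f y‖ := v.le_opNorm _
        _ = ‖T f y‖ := by rw [hv, one_mul]
        _ ≤ lipNorm (T f) := SL.norm_le_lipNorm (hT.mapsLip f hf) y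
        _ = lipNorm f := hT.norm_map f hf
    -- Step 2 : exact functional identities at (v₁, y₁) and (v₂, y₂)
    have hA : ∀ h : X → E, IsBddLip h → v₁ (T h y₁) = u₁ (h x₁) := by
      apply SL.spl hsm he₁ hu₁ hu₁e₁ x₁ (fun h => v₁ (T h y₁))
        (fun f g hf hg => Wadd v₁ y₁ f g hf hg)
        (fun c f hf => Wsmul v₁ y₁ c f hf)
        (fun f hf => Wbdd v₁ hv₁ y₁ f hf)
      rw [← hTf, h₁ _ (SL.peak_bddLip x₁ e₁), SL.peak_apply_self, hu₁e₁]
    have hI : ∀ h : X → E, IsBddLip h → v₂ (T h y₂) = u₂ (h x₂) := by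
      apply SL.spl hsm he₂ hu₂ hu₂e₂ x₂ (fun h => v₂ (T h y₂))
        (fun f g hf hg => Wadd v₂ y₂ f g hf hg)
        (fun c f hf => Wsmul v₂ y₂ c f hf)
        (fun f hf => Wbdd v₂ hv₂ y₂ f hf)
      rw [← hTg, h₂ _ (SL.peak_bddLip x₂ e₂), SL.peak_apply_self, hu₂e₂]
    -- the bridge estimate between the two points of Y
    have hbridge : ∀ h : X → E, IsBddLip h → ‖T h y₁ - T h y₂‖ ≤ lipNorm h * d := by
      intro h hh
      have h1 : ‖T h y₁ - T h y₂‖ ≤ lipConst (T h) * d :=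
        SL.norm_sub_le_lipConst (hT.mapsLip h hh) y₁ y₂
      have h2 : lipConst (T h) ≤ lipNorm h :=
        (SL.lipConst_le_lipNorm (T h)).trans_eq (hT.norm_map h hh)
      calc ‖T h y₁ - T h y₂‖ ≤ lipConst (T h) * d := h1
        _ ≤ lipNorm h * d := mul_le_mul_of_nonneg_right h2 hd0
    have hbridge2 : ∀ (v : StrongDual 𝕜 E), ‖v‖ = 1 → ∀ h : X → E, IsBddLip h →
        ‖v (T h y₁) - v (T h y₂)‖ ≤ lipNorm h * d := by
      intro v hv h hh
      calc ‖v (T h y₁) - v (T h y₂)‖ = ‖v (T h y₁ - T h y₂)‖ := by rw [map_sub]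
        _ ≤ ‖v‖ * ‖T h y₁ - T h y₂‖ := v.le_opNorm _
        _ = ‖T h y₁ - T h y₂‖ := by rw [hv, one_mul]
        _ ≤ lipNorm h * d := hbridge h hh
    -- estimate for v₂ on constants at y₁
    have hconstest : ∀ z : E, ‖v₂ (T (fun _ => z) y₁) - u₂ z‖ ≤ ‖z‖ * d := by
      intro z
      have h1 := hbridge2 v₂ hv₂ (fun _ => z) (SL.bddLip_const z)
      rw [SL.lipNorm_const] at h1
      have h2 : v₂ (T (fun _ => z) y₂) = u₂ z := hI (fun _ => z) (SL.bddLip_const z)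
      rwa [h2] at h1
    -- localization of (v₂, y₁)
    have hnz1 : ∃ z : E, v₂ (T (fun _ => z) y₁) ≠ 0 := by
      refine ⟨e₂, fun h0 => ?_⟩
      have h1 := hconstest e₂
      rw [h0, hu₂e₂, he₂, one_mul, zero_sub, norm_neg] at h1
      rw [show ‖(1:𝕜)‖ = 1 by simp] at h1
      linarith
    obtain ⟨x₁', b, zb, hzb, hbzb, hbnorm, hB⟩ := SL.loc hsm hrefl hT hv₂ y₁ hnz1
    -- consistency: x₁' = x₁
    have hx : x₁' = x₁ := by
      by_contra hne
      have hr₀ : 0 < dist x₁ x₁' := dist_pos.mpr (fun h => hne h.symm)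
      -- choose the sign s
      have hsign : ∃ s : 𝕜, (s = 1 ∨ s = -1) ∧ 1 ≤ ‖u₁ - s • u₂‖ := by
        have h2 : (2:ℝ) = ‖(u₁ - u₂) + (u₁ + u₂)‖ := by
          rw [show (u₁ - u₂) + (u₁ + u₂) = (2:𝕜) • u₁ by module]
          rw [norm_smul, hu₁, mul_one]
          simp
        have h3 : ‖(u₁ - u₂) + (u₁ + u₂)‖ ≤ ‖u₁ - u₂‖ + ‖u₁ + u₂‖ := norm_add_le _ _
        rcases le_or_gt 1 ‖u₁ - u₂‖ with hc | hc
        · exact ⟨1, Or.inl rfl, by rwa [one_smul]⟩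
        · refine ⟨-1, Or.inr rfl, ?_⟩
          rw [show u₁ - (-1 : 𝕜) • u₂ = u₁ + u₂ by module]
          linarith
      obtain ⟨s, hs01, hs⟩ := hsign
      have hsnorm : ‖s‖ = 1 := by rcases hs01 with rfl | rfl <;> simp
      have hsinv : s * s = 1 := by rcases hs01 with rfl | rfl <;> norm_num
      set wt : StrongDual 𝕜 E := v₁ - s • v₂ with hwtdef
      by_cases hwt : wt = 0
      · -- degenerate case : v₁ = s • v₂
        have hv21 : ∀ zz : E, v₂ zz = s * v₁ zz := by
          intro zz
          have h0 : wt zz = 0 := by rw [hwt]; simp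
          rw [hwtdef] at h0
          simp only [ContinuousLinearMap.sub_apply, ContinuousLinearMap.smul_apply,
            smul_eq_mul] at h0
          have h1 : v₁ zz = s * v₂ zz := sub_eq_zero.mp h0
          calc v₂ zz = (s * s) * v₂ zz := by rw [hsinv, one_mul]
            _ = s * v₁ zz := by rw [mul_assoc, ← h1]
        set hb := SLbump 𝕜 x₁ (dist x₁ x₁') e₁ with hhbdef
        have hhb : IsBddLip hb := SL.bump_bddLip x₁ hr₀.le e₁
        have hleft : v₂ (T hb y₁) = 0 := by
          rw [hB hb hhb]
          have : hb x₁' = 0 := by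
            rw [hhbdef]
            exact SL.bump_apply_far x₁ e₁ (le_of_eq (dist_comm x₁ x₁'))
          rw [this, map_zero]
        have hright : v₂ (T hb y₁) = s * ((dist x₁ x₁' : ℝ) : 𝕜) := by
          rw [hv21, hA hb hhb]
          have : hb x₁ = ((dist x₁ x₁' : ℝ) : 𝕜) • e₁ := by
            rw [hhbdef]
            exact SL.bump_apply_self x₁ hr₀.le e₁
          rw [this, map_smul, smul_eq_mul, hu₁e₁, mul_one]
        rw [hleft] at hright
        have h2 : ((dist x₁ x₁' : ℝ) : 𝕜) = 0 := by
          have := hright.symm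
          calc ((dist x₁ x₁' : ℝ) : 𝕜) = (s * s) * ((dist x₁ x₁' : ℝ) : 𝕜) := by
                rw [hsinv, one_mul]
            _ = s * (s * ((dist x₁ x₁' : ℝ) : 𝕜)) := by ring
            _ = s * 0 := by rw [← this]
            _ = 0 := by ring
        rw [RCLike.ofReal_eq_zero] at h2
        linarith
      · -- nondegenerate case
        set nw : ℝ := ‖wt‖ with hnwdef
        have hnw : 0 < nw := norm_pos_iff.mpr hwt
        set what : StrongDual 𝕜 E := ((nw⁻¹ : ℝ) : 𝕜) • wt with hwhatdef
        have hwhatnorm : ‖what‖ = 1 := by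
          rw [hwhatdef, norm_smul, RCLike.norm_ofReal, abs_of_pos (by positivity), ← hnwdef]
          field_simp
        have hwteq : ∀ zz : E, wt zz = ((nw : ℝ) : 𝕜) * what zz := by
          intro zz
          rw [hwhatdef]
          simp only [ContinuousLinearMap.smul_apply, smul_eq_mul]
          rw [← mul_assoc, ← RCLike.ofReal_mul]
          rw [mul_inv_cancel₀ hnw.ne']
          simp
        have hwtval : ∀ h : X → E, IsBddLip h →
            wt (T h y₁) = u₁ (h x₁) - s * b (h x₁') := by
          intro h hh
          rw [hwtdef]
          simp only [ContinuousLinearMap.sub_apply, ContinuousLinearMap.smul_apply,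
            smul_eq_mul]
          rw [hA h hh, hB h hh]
        have hnz2 : ∃ z : E, what (T (fun _ => z) y₁) ≠ 0 := by
          by_contra hno
          push_neg at hno
          have hwt0 : ∀ z : E, wt (T (fun _ => z) y₁) = 0 := by
            intro z
            rw [hwteq, hno z, mul_zero]
          have hptw : ∀ z : E, ‖(u₁ - s • u₂) z‖ ≤ d * ‖z‖ := by
            intro z
            have h1 := hwt0 z
            rw [hwtdef] at h1
            simp only [ContinuousLinearMap.sub_apply, ContinuousLinearMap.smul_apply,
              smul_eq_mul] at h1
            have h2 : v₁ (T (fun _ => z) y₁) = u₁ z := hA _ (SL.bddLip_const z)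
            rw [h2] at h1
            have h3 : (u₁ - s • u₂) z = s * (v₂ (T (fun _ => z) y₁) - u₂ z) := by
              simp only [ContinuousLinearMap.sub_apply, ContinuousLinearMap.smul_apply,
                smul_eq_mul]
              have h4 : u₁ z = s * v₂ (T (fun _ => z) y₁) := sub_eq_zero.mp h1
              rw [h4]
              ring
            rw [h3, norm_mul, hsnorm, one_mul]
            calc ‖v₂ (T (fun _ => z) y₁) - u₂ z‖ ≤ ‖z‖ * d := hconstest z
              _ = d * ‖z‖ := mul_comm _ _
          have hle : ‖u₁ - s • u₂‖ ≤ d := ContinuousLinearMap.opNorm_le_bound _ hd0 hptw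
          linarith
        obtain ⟨x'', cf, zc, hzc, hczc, hcnorm, hC⟩ := SL.loc hsm hrefl hT hwhatnorm y₁ hnz2
        have hkey : ∀ h : X → E, IsBddLip h →
            u₁ (h x₁) - s * b (h x₁') = ((nw : ℝ) : 𝕜) * cf (h x'') := by
          intro h hh
          rw [← hwtval h hh, hwteq, hC h hh]
        by_cases hx2 : x'' = x₁
        · -- test with a bump at x₁' with vector zb
          set ρ₁ : ℝ := dist x₁ x₁' with hρ₁def
          set hb := SLbump 𝕜 x₁' ρ₁ zb with hhbdef
          have hhb : IsBddLip hb := SL.bump_bddLip x₁' hr₀.le zb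
          have e1 : hb x₁ = 0 := by
            rw [hhbdef]
            apply SL.bump_apply_far x₁' zb
            rw [hρ₁def, dist_comm x₁ x₁']
          have e2 : hb x₁' = ((ρ₁ : ℝ) : 𝕜) • zb := by
            rw [hhbdef]
            exact SL.bump_apply_self x₁' hr₀.le zb
          have h5 := hkey hb hhb
          rw [hx2, e1, e2, map_zero, map_zero, map_smul, smul_eq_mul, hbzb, mul_one,
            mul_zero, zero_sub] at h5
          have h6 : ((ρ₁ : ℝ) : 𝕜) = 0 := by
            have h5' : s * ((ρ₁ : ℝ) : 𝕜) = 0 := neg_eq_zero.mp h5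
            calc ((ρ₁ : ℝ) : 𝕜) = (s * s) * ((ρ₁ : ℝ) : 𝕜) := by rw [hsinv, one_mul]
              _ = s * (s * ((ρ₁ : ℝ) : 𝕜)) := by ring
              _ = s * 0 := by rw [h5']
              _ = 0 := mul_zero s
          rw [RCLike.ofReal_eq_zero] at h6
          rw [hρ₁def] at h6
          linarith
        · -- test with a bump at x₁ with vector e₁
          have hx2' : 0 < dist x₁ x'' := dist_pos.mpr (fun h => hx2 h.symm)
          set ρ₀ : ℝ := min (dist x₁ x₁') (dist x₁ x'') with hρ₀def
          have hρ₀ : 0 < ρ₀ := lt_min hr₀ hx2'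
          set hb := SLbump 𝕜 x₁ ρ₀ e₁ with hhbdef
          have hhb : IsBddLip hb := SL.bump_bddLip x₁ hρ₀.le e₁
          have e1 : hb x₁ = ((ρ₀ : ℝ) : 𝕜) • e₁ := by
            rw [hhbdef]; exact SL.bump_apply_self x₁ hρ₀.le e₁
          have e2 : hb x₁' = 0 := by
            rw [hhbdef]
            apply SL.bump_apply_far x₁ e₁
            rw [dist_comm x₁' x₁]
            exact min_le_left _ _
          have e3 : hb x'' = 0 := by
            rw [hhbdef]
            apply SL.bump_apply_far x₁ e₁
            rw [dist_comm x'' x₁]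
            exact min_le_right _ _
          have h5 := hkey hb hhb
          rw [e1, e2, e3, map_zero, map_zero, map_smul, smul_eq_mul, hu₁e₁, mul_one,
            mul_zero, mul_zero, sub_zero] at h5
          rw [RCLike.ofReal_eq_zero] at h5
          linarith
    -- final estimate
    rw [hx] at hB
    set ρ : ℝ := min (dist x₁ x₂) 1 with hρdef
    have hρ0 : 0 ≤ ρ := le_min dist_nonneg zero_le_one
    have hρ1 : ρ ≤ 1 := min_le_right _ _
    have hρr : ρ ≤ dist x₁ x₂ := min_le_left _ _
    set hh : X → E := SLbump 𝕜 x₁ ρ zb with hhhdef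
    have hhbl : IsBddLip hh := SL.bump_bddLip x₁ hρ0 zb
    have hval1 : v₂ (T hh y₁) = ((ρ : ℝ) : 𝕜) := by
      rw [hB hh hhbl]
      have : hh x₁ = ((ρ : ℝ) : 𝕜) • zb := by
        rw [hhhdef]; exact SL.bump_apply_self x₁ hρ0 zb
      rw [this, map_smul, smul_eq_mul, hbzb, mul_one]
    have hval2 : v₂ (T hh y₂) = 0 := by
      rw [hI hh hhbl]
      have : hh x₂ = 0 := by
        rw [hhhdef]
        apply SL.bump_apply_far x₁ zb
        rw [dist_comm x₂ x₁]
        exact hρr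
      rw [this, map_zero]
    have hest := hbridge2 v₂ hv₂ hh hhbl
    rw [hval1, hval2, sub_zero, RCLike.norm_ofReal, abs_of_nonneg hρ0] at hest
    have hlip : lipNorm hh ≤ 1 := by
      rw [hhhdef]
      exact SL.bump_lipNorm_le x₁ hρ0 hρ1 hzb
    have hρd : ρ ≤ d := by
      calc ρ ≤ lipNorm hh * d := hest
        _ ≤ 1 * d := mul_le_mul_of_nonneg_right hlip hd0
        _ = d := one_mul d
    rcases le_or_gt (dist x₁ x₂) 1 with hr1 | hr1
    · have heq : ρ = dist x₁ x₂ := min_eq_left hr1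
      rw [heq] at hρd
      calc dist x₁ x₂ ≤ d := hρd
        _ = 1 * d := (one_mul d).symm
        _ ≤ M * d := mul_le_mul_of_nonneg_right hM1 hd0
    · have heq : ρ = 1 := min_eq_right hr1.le
      rw [heq] at hρd
      linarith
end

section
/- Let X and Y be metric spaces and let E and F be normed spaces. Every standard isometry T : Lip(X,E) → Lip(Y,F) is a surjective linear isometry of Lip(X,E) onto Lip(Y,F); moreover, the associated map J : Y → Iso(E,F) is Lipschitz when Iso(E,F) is endowed with the operator norm metric. -/
open Function Metric Set
open scoped NNReal

section Aux19

variable {𝕜 X Y E F : Type*} [RCLike 𝕜] [MetricSpace X] [MetricSpace Y]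
  [NormedAddCommGroup E] [NormedSpace 𝕜 E] [NormedAddCommGroup F] [NormedSpace 𝕜 F]

lemma aux19_lipSet_bddBelow (f : X → E) :
    BddBelow {K : ℝ | 0 ≤ K ∧ ∀ x y : X, ‖f x - f y‖ ≤ K * dist x y} :=
  ⟨0, fun _ hK => hK.1⟩

lemma aux19_lipSet_nonempty {f : X → E} (hf : IsBddLip f) :
    Set.Nonempty {K : ℝ | 0 ≤ K ∧ ∀ x y : X, ‖f x - f y‖ ≤ K * dist x y} := by
  obtain ⟨⟨K, hK⟩, _⟩ := hf
  exact ⟨max K 0, le_max_right _ _, fun x y => (hK x y).trans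
    (mul_le_mul_of_nonneg_right (le_max_left _ _) dist_nonneg)⟩

lemma aux19_lipConst_nonneg {f : X → E} (hf : IsBddLip f) : 0 ≤ lipConst f :=
  le_csInf (aux19_lipSet_nonempty hf) fun _ hK => hK.1

lemma aux19_lipConst_bound {f : X → E} (hf : IsBddLip f) (x y : X) :
    ‖f x - f y‖ ≤ lipConst f * dist x y := by
  rcases eq_or_lt_of_le (dist_nonneg : (0:ℝ) ≤ dist x y) with h | h
  · have hxy : x = y := by rw [← dist_eq_zero]; exact h.symm
    simp [hxy, ← h]
  · rw [← div_le_iff₀ h]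
    refine le_csInf (aux19_lipSet_nonempty hf) fun K hK => ?_
    rw [div_le_iff₀ h]
    exact hK.2 x y

lemma aux19_iSup_nonneg (f : X → E) : 0 ≤ ⨆ x : X, ‖f x‖ :=
  Real.iSup_nonneg fun x => norm_nonneg _

lemma aux19_le_iSup {f : X → E} {C : ℝ} (hC : ∀ x, ‖f x‖ ≤ C) (x : X) :
    ‖f x‖ ≤ ⨆ z : X, ‖f z‖ :=
  le_ciSup ⟨C, by rintro r ⟨z, rfl⟩; exact hC z⟩ x

lemma aux19_lipNorm_nonneg (f : X → E) : 0 ≤ lipNorm f :=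
  le_trans (aux19_iSup_nonneg f) (le_max_right _ _)

/-- The core estimate: composing with a `<2`-distance-preserving map and a field of isometries
that is locally constant (at scale `2`) does not increase the Lipschitz norm. -/
lemma aux19_core (φ : Y → X) (J : Y → E ≃ₗᵢ[𝕜] F)
    (hφ : PreservesDistLT2 φ)
    (hJ : ∀ y y' : Y, dist y y' < 2 → J y = J y')
    (f : X → E) (hf : IsBddLip f) :
    IsBddLip (fun y => J y (f (φ y))) ∧
      lipNorm (fun y => J y (f (φ y))) ≤ lipNorm f := by
  obtain ⟨-, C, hC⟩ := id hf
  set M : ℝ := ⨆ x : X, ‖f x‖ with hMdef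
  have hM0 : 0 ≤ M := aux19_iSup_nonneg f
  have hMle : ∀ x, ‖f x‖ ≤ M := aux19_le_iSup hC
  have hMnorm : M ≤ lipNorm f := le_max_right _ _
  have hLnn : 0 ≤ lipNorm f := aux19_lipNorm_nonneg f
  have hlip : ∀ y y' : Y, ‖J y (f (φ y)) - J y' (f (φ y'))‖ ≤ lipNorm f * dist y y' := by
    intro y y'
    rcases lt_or_ge (dist y y') 2 with h | h
    · rw [hJ y y' h]
      calc ‖J y' (f (φ y)) - J y' (f (φ y'))‖ = ‖f (φ y) - f (φ y')‖ := by
            rw [← map_sub]; exact (J y').norm_map _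
        _ ≤ lipConst f * dist (φ y) (φ y') := aux19_lipConst_bound hf _ _
        _ = lipConst f * dist y y' := by rw [hφ y y' h]
        _ ≤ lipNorm f * dist y y' :=
            mul_le_mul_of_nonneg_right (le_max_left _ _) dist_nonneg
    · calc ‖J y (f (φ y)) - J y' (f (φ y'))‖
          ≤ ‖J y (f (φ y))‖ + ‖J y' (f (φ y'))‖ := norm_sub_le _ _
        _ = ‖f (φ y)‖ + ‖f (φ y')‖ := by rw [(J y).norm_map, (J y').norm_map]
        _ ≤ M + M := add_le_add (hMle _) (hMle _)
        _ ≤ M * dist y y' := by nlinarith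
        _ ≤ lipNorm f * dist y y' := mul_le_mul_of_nonneg_right hMnorm dist_nonneg
  have hbd : ∀ y : Y, ‖J y (f (φ y))‖ ≤ M := fun y => by
    rw [(J y).norm_map]; exact hMle _
  refine ⟨⟨⟨lipNorm f, hlip⟩, M, hbd⟩, max_le ?_ ?_⟩
  · exact csInf_le (aux19_lipSet_bddBelow _) ⟨hLnn, hlip⟩
  · exact Real.iSup_le (fun y => (hbd y).trans hMnorm) hLnn

lemma aux19_add {f g : X → E} (hf : IsBddLip f) (hg : IsBddLip g) : IsBddLip (f + g) := by
  obtain ⟨⟨K, hK⟩, C, hC⟩ := hf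
  obtain ⟨⟨K', hK'⟩, C', hC'⟩ := hg
  refine ⟨⟨K + K', fun x y => ?_⟩, C + C', fun x => ?_⟩
  · have h1 : (f + g) x - (f + g) y = (f x - f y) + (g x - g y) := by
      simp only [Pi.add_apply]; abel
    calc ‖(f + g) x - (f + g) y‖ ≤ ‖f x - f y‖ + ‖g x - g y‖ := by
          rw [h1]; exact norm_add_le _ _
      _ ≤ K * dist x y + K' * dist x y := add_le_add (hK x y) (hK' x y)
      _ = (K + K') * dist x y := by ring
  · calc ‖(f + g) x‖ ≤ ‖f x‖ + ‖g x‖ := norm_add_le _ _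
      _ ≤ C + C' := add_le_add (hC x) (hC' x)

lemma aux19_smul (c : 𝕜) {f : X → E} (hf : IsBddLip f) : IsBddLip (c • f) := by
  obtain ⟨⟨K, hK⟩, C, hC⟩ := hf
  refine ⟨⟨‖c‖ * K, fun x y => ?_⟩, ‖c‖ * C, fun x => ?_⟩
  · have h1 : (c • f) x - (c • f) y = c • (f x - f y) := by
      simp only [Pi.smul_apply, smul_sub]
    rw [h1, norm_smul, mul_assoc]
    exact mul_le_mul_of_nonneg_left (hK x y) (norm_nonneg c)
  · rw [Pi.smul_apply, norm_smul]
    exact mul_le_mul_of_nonneg_left (hC x) (norm_nonneg c)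

end Aux19

/-- Every standard isometry is a surjective linear isometry, and its associated map
`J : Y → Iso(E,F)` is Lipschitz for the operator norm. -/
theorem stmt19 {𝕜 X Y E F : Type*} [RCLike 𝕜] [MetricSpace X] [MetricSpace Y]
    [NormedAddCommGroup E] [NormedSpace 𝕜 E] [NormedAddCommGroup F] [NormedSpace 𝕜 F]
    (T : (X → E) → (Y → F)) (φ : Y → X) (ψ : X → Y) (J : Y → E ≃ₗᵢ[𝕜] F)
    (hli : Function.LeftInverse ψ φ) (hri : Function.RightInverse ψ φ)
    (hφ : PreservesDistLT2 φ) (hψ : PreservesDistLT2 ψ)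
    (hJ : ∀ y y' : Y, SameTwoComponent y y' → J y = J y')
    (hT : ∀ f : X → E, IsBddLip f → ∀ y : Y, T f y = J y (f (φ y))) :
    IsLipIso 𝕜 T ∧
    ∃ K : ℝ, ∀ y y' : Y,
      ‖((J y).toContinuousLinearEquiv : E →L[𝕜] F) -
        ((J y').toContinuousLinearEquiv : E →L[𝕜] F)‖ ≤ K * dist y y' := by
  -- One-step constancy of `J`.
  have hJ2 : ∀ y y' : Y, dist y y' < 2 → J y = J y' := fun y y' h =>
    hJ y y' (Relation.ReflTransGen.single h)
  -- The inverse field of isometries is locally constant on `X`.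
  have hJ2' : ∀ x x' : X, dist x x' < 2 → (J (ψ x)).symm = (J (ψ x')).symm := by
    intro x x' h
    rw [hJ2 (ψ x) (ψ x') (by rw [hψ x x' h]; exact h)]
  -- Forward core estimate.
  have key1 : ∀ f : X → E, IsBddLip f → IsBddLip (T f) ∧ lipNorm (T f) ≤ lipNorm f := by
    intro f hf
    have hfe : T f = fun y => J y (f (φ y)) := funext (hT f hf)
    rw [hfe]
    exact aux19_core φ J hφ hJ2 f hf
  -- Backward core estimate.
  have key2 : ∀ g : Y → F, IsBddLip g →
      IsBddLip (fun x => (J (ψ x)).symm (g (ψ x))) ∧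
        lipNorm (fun x => (J (ψ x)).symm (g (ψ x))) ≤ lipNorm g := fun g hg =>
    aux19_core ψ (fun x => (J (ψ x)).symm) hψ hJ2' g hg
  constructor
  · refine ⟨fun f hf => (key1 f hf).1, ?_, ?_, ?_, ?_⟩
    · -- additivity
      intro f g hf hg
      funext y
      rw [Pi.add_apply, hT _ (aux19_add hf hg) y, hT f hf y, hT g hg y, Pi.add_apply, map_add]
    · -- homogeneity
      intro c f hf
      funext y
      rw [Pi.smul_apply, hT _ (aux19_smul c hf) y, hT f hf y, Pi.smul_apply, map_smul]
    · -- isometry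
      intro f hf
      refine le_antisymm (key1 f hf).2 ?_
      have hfe : (fun x => (J (ψ x)).symm (T f (ψ x))) = f := by
        funext x
        rw [hT f hf (ψ x), hri x, LinearIsometryEquiv.symm_apply_apply]
      have := (key2 (T f) (key1 f hf).1).2
      rwa [hfe] at this
    · -- surjectivity
      intro g hg
      refine ⟨fun x => (J (ψ x)).symm (g (ψ x)), (key2 g hg).1, ?_⟩
      funext y
      rw [hT _ (key2 g hg).1 y, hli y, LinearIsometryEquiv.apply_symm_apply]
  · -- `J` is 1-Lipschitz for the operator norm
    refine ⟨1, fun y y' => ?_⟩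
    have hnorm : ∀ z : Y, ‖((J z).toContinuousLinearEquiv : E →L[𝕜] F)‖ ≤ 1 := by
      intro z
      refine ContinuousLinearMap.opNorm_le_bound _ zero_le_one fun v => ?_
      simp [(J z).norm_map]
    rcases lt_or_ge (dist y y') 2 with h | h
    · rw [hJ2 y y' h, sub_self, norm_zero, one_mul]
      exact dist_nonneg
    · calc ‖((J y).toContinuousLinearEquiv : E →L[𝕜] F) -
            ((J y').toContinuousLinearEquiv : E →L[𝕜] F)‖
          ≤ ‖((J y).toContinuousLinearEquiv : E →L[𝕜] F)‖ +
            ‖((J y').toContinuousLinearEquiv : E →L[𝕜] F)‖ := norm_sub_le _ _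
        _ ≤ 1 + 1 := add_le_add (hnorm y) (hnorm y')
        _ ≤ 1 * dist y y' := by linarith
end
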